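/- arXiv:1010.4654 — 6 statements merged into one kernel-verified Lean document; each statement's English description precedes it below -/
import Mathlib

section
/- For every function f meromorphic on the open unit disk 𝔻 one has inf_{z ∈ 𝔻} f^#(z) ≤ 1/2. -/
open Complex Metric Set Filter Topology
open scoped Classical

/-- The spherical derivative of a meromorphic function: `|f'|/(1+|f|²)` at
points where `f` is analytic (finite), and `(1/f)^#` at poles. -/
noncomputable def sphDeriv (f : ℂ → ℂ) (z : ℂ) : ℝ :=
  if AnalyticAt ℂ f z then ‖deriv f z‖ / (1 + ‖f z‖ ^ 2)
  else ‖deriv (fun w => (f w)⁻¹) z‖ / (1 + ‖(f z)⁻¹‖ ^ 2)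

/-- `f` is meromorphic on `D`, normalized so that at every non-analytic point
(i.e. pole) the value of `f` is `0` and the reciprocal `1/f` is analytic
(it is the analytic extension, vanishing at the pole). -/
def MeromorphicNiceOn (f : ℂ → ℂ) (D : Set ℂ) : Prop :=
  MeromorphicOn f D ∧
    ∀ z ∈ D, ¬ AnalyticAt ℂ f z → f z = 0 ∧ AnalyticAt ℂ (fun w => (f w)⁻¹) z

/-- The chordal (spherical) distance on the Riemann sphere `ℂ ∪ {∞}`. -/
noncomputable def chordalDist : OnePoint ℂ → OnePoint ℂ → ℝ
  | Option.some z, Option.some w =>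
      ‖z - w‖ / (Real.sqrt (1 + ‖z‖ ^ 2) * Real.sqrt (1 + ‖w‖ ^ 2))
  | Option.some z, Option.none => 1 / Real.sqrt (1 + ‖z‖ ^ 2)
  | Option.none, Option.some w => 1 / Real.sqrt (1 + ‖w‖ ^ 2)
  | Option.none, Option.none => 0

/-- A meromorphic function viewed as a map into the Riemann sphere: at
non-analytic points (poles) the value is `∞`. -/
noncomputable def spherify (f : ℂ → ℂ) (z : ℂ) : OnePoint ℂ :=
  if AnalyticAt ℂ f z then (f z : OnePoint ℂ) else OnePoint.infty

/-- Locally uniform convergence on `D` with respect to the chordal metric. -/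
def SphTendstoLocallyUniformlyOn (F : ℕ → ℂ → OnePoint ℂ) (g : ℂ → OnePoint ℂ)
    (D : Set ℂ) : Prop :=
  ∀ ε : ℝ, 0 < ε → ∀ z ∈ D, ∃ t ∈ 𝓝[D] z,
    ∀ᶠ n in atTop, ∀ w ∈ t, chordalDist (F n w) (g w) < ε

/-- A family of meromorphic functions is normal on `D` if every sequence has a
subsequence converging locally uniformly on `D` with respect to the spherical
metric (the limit may take the value `∞`, e.g. be the constant `∞`). -/
def SphNormalOn (𝓕 : Set (ℂ → ℂ)) (D : Set ℂ) : Prop :=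
  ∀ F : ℕ → ℂ → ℂ, (∀ n, F n ∈ 𝓕) →
    ∃ φ : ℕ → ℕ, StrictMono φ ∧ ∃ g : ℂ → OnePoint ℂ,
      SphTendstoLocallyUniformlyOn (fun n => spherify (F (φ n))) g D



theorem analyticAt_deriv' {f : ℂ → ℂ} {p : ℂ} (h : AnalyticAt ℂ f p) : AnalyticAt ℂ (deriv f) p := by
  have h2 := ((ContinuousLinearMap.apply ℂ ℂ (1:ℂ)).analyticAt (fderiv ℂ f p)).comp h.fderiv
  refine h2.congr ?_
  filter_upwards with w
  simp [Function.comp, ContinuousLinearMap.apply_apply, fderiv_apply_one_eq_deriv]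

theorem dirDeriv {F : ℂ → ℂ} {p e : ℂ} {s : ℝ} (hF : DifferentiableAt ℂ F (p + s*e)) :
    HasDerivAt (fun s : ℝ => F (p + s*e)) (deriv F (p + s*e) * e) s := by
  have h1 : HasDerivAt (fun s : ℝ => p + (s:ℂ)*e) e s := by
    simpa using ((Complex.ofRealCLM.hasDerivAt (x := s)).mul_const e).const_add p
  have h2 := (hF.hasDerivAt.hasFDerivAt.restrictScalars ℝ).comp_hasDerivAt s h1
  simpa [mul_comm, Function.comp_def] using h2

theorem dirDerivRe {G : ℝ → ℂ} {g : ℂ} {s : ℝ} (h : HasDerivAt G g s) :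
    HasDerivAt (fun s => (G s).re) g.re s := by
  simpa [Function.comp_def] using (Complex.reCLM.hasFDerivAt.comp_hasDerivAt s h)

theorem dirDerivIm {G : ℝ → ℂ} {g : ℂ} {s : ℝ} (h : HasDerivAt G g s) :
    HasDerivAt (fun s => (G s).im) g.im s := by
  simpa [Function.comp_def] using (Complex.imCLM.hasFDerivAt.comp_hasDerivAt s h)

theorem normsq1 (z : ℂ) : 1 + ‖z‖^2 = 1 + (z.re * z.re + z.im * z.im) := by
  rw [Complex.sq_norm, Complex.normSq_apply]

theorem normsq1_pos (z : ℂ) : (0:ℝ) < 1 + (z.re * z.re + z.im * z.im) := by nlinarith [sq_nonneg z.re, sq_nonneg z.im]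

/-- second derivative value of the `log(1+|h|²)` part, direction `e`. -/
noncomputable def aB (z w u e : ℂ) : ℝ :=
  ((2*((w*e).re^2 + (w*e).im^2 + z.re*(u*e*e).re + z.im*(u*e*e).im)) * (1 + z.re^2 + z.im^2)
    - (2*(z.re*(w*e).re + z.im*(w*e).im))^2) / (1 + z.re^2 + z.im^2)^2

theorem coreDir {h : ℂ → ℂ} {p : ℂ} (hh : AnalyticAt ℂ h p) (hd : deriv h p ≠ 0) :
    ∃ T : ℂ, ∀ e : ℂ, ∃ g : ℝ → ℝ,
      (∀ᶠ s in 𝓝 (0:ℝ), HasDerivAt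
        (fun s : ℝ => Real.log (‖deriv h (p + s*e)‖ / (1 + ‖h (p + s*e)‖^2))) (g s) s) ∧
      HasDerivAt g ((T*e*e).re - aB (h p) (deriv h p) (deriv (deriv h) p) e) 0 := by
  have hDh : AnalyticAt ℂ (deriv h) p := analyticAt_deriv' hh
  set C : ℂ := (starRingEnd ℂ) (deriv h p) with hCdef
  have hC : C ≠ 0 := by simpa [hCdef] using hd
  have hCd : C * deriv h p ∈ slitPlane := by
    have : C * deriv h p = (Complex.normSq (deriv h p) : ℂ) := by
      rw [hCdef, ← Complex.normSq_eq_conj_mul_self]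
    rw [this]
    exact Complex.mem_slitPlane_iff.2 (Or.inl (by simpa using Complex.normSq_pos.2 hd))
  set L : ℂ → ℂ := fun w => Complex.log (C * deriv h w) with hLdef
  have hmul : AnalyticAt ℂ (fun w => C * deriv h w) p := analyticAt_const.mul hDh
  have hLana : AnalyticAt ℂ L p :=
    AnalyticAt.comp (g := Complex.log) (f := fun w => C * deriv h w) (analyticAt_clog hCd) hmul
  have hL' : AnalyticAt ℂ (deriv L) p := analyticAt_deriv' hLana
  refine ⟨deriv (deriv L) p, fun e => ?_⟩
  have hev : ∀ᶠ w in 𝓝 p, AnalyticAt ℂ h w ∧ AnalyticAt ℂ L w ∧ deriv h w ≠ 0 := by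
    filter_upwards [hh.eventually_analyticAt, hLana.eventually_analyticAt,
      hDh.continuousAt.eventually_ne hd] with w h1 h2 h3
    exact ⟨h1, h2, h3⟩
  obtain ⟨U, hU, hUopen, hpU⟩ := _root_.eventually_nhds_iff.mp hev
  have hγc : Continuous fun s : ℝ => p + (s:ℂ)*e := by continuity
  have hγ0 : p + ((0:ℝ):ℂ)*e = p := by simp
  -- abbreviations
  set X : ℝ → ℝ := fun s => (h (p + s*e)).re with hXdef
  set Y : ℝ → ℝ := fun s => (h (p + s*e)).im with hYdef
  set X' : ℝ → ℝ := fun s => (deriv h (p + s*e) * e).re with hX'def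
  set Y' : ℝ → ℝ := fun s => (deriv h (p + s*e) * e).im with hY'def
  set n : ℝ → ℝ := fun s => 1 + (X s * X s + Y s * Y s) with hndef
  set num : ℝ → ℝ := fun s => X' s * X s + X s * X' s + (Y' s * Y s + Y s * Y' s) with hnumdef
  have hnpos : ∀ s, 0 < n s := fun s => normsq1_pos _
  refine ⟨fun s => (deriv L (p + s*e) * e).re - num s / n s, ?_, ?_⟩
  · -- eventual first derivative
    have hUs : ∀ᶠ s : ℝ in 𝓝 0, (p + (s:ℂ)*e) ∈ U :=
      hγc.continuousAt.eventually_mem (hUopen.mem_nhds (by rw [hγ0]; exact hpU))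
    filter_upwards [hUs] with s hsU
    obtain ⟨hana, hLw, hdw⟩ := hU _ hsU
    have hA : HasDerivAt (fun σ : ℝ => (L (p + σ*e)).re) ((deriv L (p + s*e) * e).re) s :=
      dirDerivRe (dirDeriv hLw.differentiableAt)
    have hX : HasDerivAt X (X' s) s := dirDerivRe (dirDeriv hana.differentiableAt)
    have hY : HasDerivAt Y (Y' s) s := dirDerivIm (dirDeriv hana.differentiableAt)
    have hn : HasDerivAt n (num s) s := (((hX.mul hX).add (hY.mul hY)).const_add 1)
    have hlogn : HasDerivAt (fun σ => Real.log (n σ)) (num s / n s) s :=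
      hn.log (ne_of_gt (hnpos s))
    have hcomb := (hA.sub_const (Real.log ‖C‖)).sub hlogn
    refine hcomb.congr_of_eventuallyEq ?_
    have hUs' : ∀ᶠ σ : ℝ in 𝓝 s, (p + (σ:ℂ)*e) ∈ U :=
      hγc.continuousAt.eventually_mem (hUopen.mem_nhds hsU)
    filter_upwards [hUs'] with σ hσU
    obtain ⟨-, -, hdσ⟩ := hU _ hσU
    have hnorm : ‖deriv h (p + (σ:ℝ)*e)‖ ≠ 0 := norm_ne_zero_iff.2 hdσ
    have e1 : Real.log (‖deriv h (p + σ*e)‖ / (1 + ‖h (p + σ*e)‖^2)) =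
        Real.log ‖deriv h (p + σ*e)‖ - Real.log (1 + ‖h (p + σ*e)‖^2) :=
      Real.log_div hnorm (by positivity)
    have e2 : (L (p + (σ:ℝ)*e)).re = Real.log ‖C‖ + Real.log ‖deriv h (p + (σ:ℝ)*e)‖ := by
      rw [hLdef]
      simp only [Complex.log_re, map_mul]
      rw [norm_mul,
        Real.log_mul (norm_ne_zero_iff.2 hC) hnorm]
    have e3 : (1:ℝ) + ‖h (p + (σ:ℝ)*e)‖^2 = n σ := normsq1 _
    simp only [Pi.sub_apply]
    rw [e1, e2, e3]
    ring
  · -- second derivative at 0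
    have hdL : DifferentiableAt ℂ (deriv L) (p + ((0:ℝ):ℂ)*e) := by
      rw [hγ0]; exact hL'.differentiableAt
    have hgA : HasDerivAt (fun σ : ℝ => (deriv L (p + σ*e) * e).re)
        ((deriv (deriv L) p * e * e).re) 0 := by
      have := dirDerivRe ((dirDeriv hdL).mul_const e)
      rwa [hγ0] at this
    have hdh2 : DifferentiableAt ℂ (deriv h) (p + ((0:ℝ):ℂ)*e) := by
      rw [hγ0]; exact hDh.differentiableAt
    have hdh1 : DifferentiableAt ℂ h (p + ((0:ℝ):ℂ)*e) := by
      rw [hγ0]; exact hh.differentiableAt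
    have hX : HasDerivAt X (X' 0) 0 := dirDerivRe (dirDeriv hdh1)
    have hY : HasDerivAt Y (Y' 0) 0 := dirDerivIm (dirDeriv hdh1)
    have hX' : HasDerivAt X' ((deriv (deriv h) p * e * e).re) 0 := by
      have := dirDerivRe ((dirDeriv hdh2).mul_const e)
      rwa [hγ0] at this
    have hY' : HasDerivAt Y' ((deriv (deriv h) p * e * e).im) 0 := by
      have := dirDerivIm ((dirDeriv hdh2).mul_const e)
      rwa [hγ0] at this
    have hN : HasDerivAt num (((deriv (deriv h) p * e * e).re * X 0 + X' 0 * X' 0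
        + (X' 0 * X' 0 + X 0 * (deriv (deriv h) p * e * e).re))
        + ((deriv (deriv h) p * e * e).im * Y 0 + Y' 0 * Y' 0
        + (Y' 0 * Y' 0 + Y 0 * (deriv (deriv h) p * e * e).im))) 0 :=
      ((hX'.mul hX).add (hX.mul hX')).add ((hY'.mul hY).add (hY.mul hY'))
    have hn : HasDerivAt n (num 0) 0 := (((hX.mul hX).add (hY.mul hY)).const_add 1)
    have hdiv := hN.div hn (ne_of_gt (hnpos 0))
    have hfin := hgA.sub hdiv
    refine hfin.congr_deriv ?_
    simp only [hX'def, hY'def, hXdef, hYdef, hnumdef, hndef, Complex.ofReal_zero, zero_mul,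
      add_zero, aB]
    have hpos := normsq1_pos (h p)
    rw [sub_right_inj, div_eq_div_iff (by positivity) (by positivity)]
    ring



theorem aB_sum (z w u : ℂ) : aB z w u 1 + aB z w u I = 4 * (‖w‖ / (1 + ‖z‖^2))^2 := by
  have hz : ‖z‖^2 = z.re^2 + z.im^2 := by
    rw [Complex.sq_norm, Complex.normSq_apply]; ring
  have hw : ‖w‖^2 = w.re^2 + w.im^2 := by
    rw [Complex.sq_norm, Complex.normSq_apply]; ring
  have hpos : (0:ℝ) < 1 + z.re^2 + z.im^2 := by positivity
  have h1 : w * I * I = -w := by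
    rw [mul_assoc, Complex.I_mul_I, mul_neg_one]
  have h2 : u * I * I = -u := by
    rw [mul_assoc, Complex.I_mul_I, mul_neg_one]
  simp only [aB, mul_one, Complex.mul_I_re, Complex.mul_I_im, h1, h2, Complex.neg_re,
    Complex.neg_im]
  rw [div_pow, hz, hw]
  field_simp
  ring

theorem secondDerivTest {φ φ' : ℝ → ℝ} {a : ℝ}
    (h1 : ∀ᶠ s in 𝓝 (0:ℝ), HasDerivAt φ (φ' s) s)
    (h2 : HasDerivAt φ' a 0) (h3 : IsLocalMin φ 0) : 0 ≤ a := by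
  by_contra hneg
  push_neg at hneg
  have h10 : HasDerivAt φ (φ' 0) 0 := h1.self_of_nhds
  have h0 : φ' 0 = 0 := by
    have := h3.deriv_eq_zero
    rwa [h10.deriv] at this
  have hs : Tendsto (slope φ' 0) (𝓝[≠] 0) (𝓝 a) := hasDerivAt_iff_tendsto_slope.mp h2
  have hev : ∀ᶠ s in 𝓝[≠] (0:ℝ), slope φ' 0 s < a/2 :=
    hs.eventually (eventually_lt_nhds (by linarith))
  have hev' : ∀ᶠ s in 𝓝 (0:ℝ), s ≠ 0 → slope φ' 0 s < a/2 := eventually_nhdsWithin_iff.mp hev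
  have hmin : ∀ᶠ s in 𝓝 (0:ℝ), φ 0 ≤ φ s := h3
  obtain ⟨δ, hδ, hall⟩ := Metric.eventually_nhds_iff.mp (h1.and (hev'.and hmin))
  set t := δ/2 with ht
  have htpos : 0 < t := by positivity
  have hsub : ∀ s ∈ Icc (0:ℝ) t, dist s 0 < δ := by
    intro s hs
    rw [Real.dist_eq, sub_zero]
    rw [_root_.abs_of_nonneg hs.1]
    have := hs.2; simp only [ht] at this ⊢; linarith
  have hanti : StrictAntiOn φ (Icc 0 t) := by
    apply strictAntiOn_of_deriv_neg (convex_Icc 0 t)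
    · intro s hs
      exact ((hall (hsub s hs)).1).continuousAt.continuousWithinAt
    · intro s hs
      rw [interior_Icc] at hs
      have hδs : dist s 0 < δ := hsub s ⟨le_of_lt hs.1, le_of_lt hs.2⟩
      obtain ⟨hd, hsl, -⟩ := hall hδs
      rw [hd.deriv]
      have := hsl (ne_of_gt hs.1)
      rw [slope_def_field] at this
      have h4 : φ' s / s < a/2 := by
        simpa [h0] using this
      have h5 : φ' s < (a/2) * s := by
        rw [div_lt_iff₀ hs.1] at h4; linarith
      have h6 : (a/2) * s < 0 := mul_neg_of_neg_of_pos (by linarith) hs.1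
      linarith
  have hlt : φ t < φ 0 := hanti ⟨le_refl 0, le_of_lt htpos⟩ ⟨le_of_lt htpos, le_refl t⟩ htpos
  have hge : φ 0 ≤ φ t := (hall (hsub t ⟨le_of_lt htpos, le_refl t⟩)).2.2
  linarith


theorem reAffine (p e : ℂ) (s : ℝ) : (p + s*e).re = p.re + s*e.re := by
  simp [Complex.add_re, Complex.mul_re]

theorem imAffine (p e : ℂ) (s : ℝ) : (p + s*e).im = p.im + s*e.im := by
  simp [Complex.add_im, Complex.mul_im]

theorem vDir (a μ : ℝ) (ha : 0 < a) (p e : ℂ) :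
    ∃ gv : ℝ → ℝ,
      (∀ s : ℝ, HasDerivAt (fun s : ℝ => Real.log μ -
          Real.log (1 + a*(((p + s*e).re)^2 + ((p + s*e).im)^2))) (gv s) s) ∧
      HasDerivAt gv (-((a*(2*e.re^2 + 2*e.im^2) * (1 + a*(p.re^2+p.im^2))
          - (a*(2*(p.re*e.re) + 2*(p.im*e.im)))^2) / (1 + a*(p.re^2+p.im^2))^2)) 0 := by
  set P : ℝ → ℝ := fun s => 1 + a*((p.re + s*e.re)^2 + (p.im + s*e.im)^2) with hPdef
  set P' : ℝ → ℝ := fun s => a*(2*(p.re + s*e.re)*e.re + 2*(p.im + s*e.im)*e.im) with hP'def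
  have hPpos : ∀ s, 0 < P s := by
    intro s
    have : 0 ≤ (p.re + s*e.re)^2 + (p.im + s*e.im)^2 := by positivity
    have := mul_nonneg (le_of_lt ha) this
    simp only [hPdef]; linarith
  have hx : ∀ s : ℝ, HasDerivAt (fun s : ℝ => p.re + s*e.re) e.re s := by
    intro s
    simpa using ((hasDerivAt_id s).mul_const e.re).const_add p.re
  have hy : ∀ s : ℝ, HasDerivAt (fun s : ℝ => p.im + s*e.im) e.im s := by
    intro s
    simpa using ((hasDerivAt_id s).mul_const e.im).const_add p.im
  have hP : ∀ s, HasDerivAt P (P' s) s := by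
    intro s
    have h1 := (((hx s).pow 2).add ((hy s).pow 2)).const_mul a
    have h2 := h1.const_add 1
    refine h2.congr_deriv ?_
    simp only [hP'def]
    ring
  refine ⟨fun s => -(P' s / P s), ?_, ?_⟩
  · intro s
    have hlog : HasDerivAt (fun s => Real.log (P s)) (P' s / P s) s :=
      (hP s).log (ne_of_gt (hPpos s))
    have h2 := (hasDerivAt_const s (Real.log μ)).sub hlog
    rw [zero_sub] at h2
    refine h2.congr_of_eventuallyEq ?_
    filter_upwards with σ
    simp only [Pi.sub_apply]
    rw [reAffine, imAffine]
  · have hP'd : HasDerivAt P' (a*(2*(e.re*e.re) + 2*(e.im*e.im))) 0 := by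
      have h1 := ((((hx 0).mul_const e.re).const_mul 2).add
        (((hy 0).mul_const e.im).const_mul 2)).const_mul a
      exact h1.congr_of_eventuallyEq (by filter_upwards with σ; simp only [hP'def, Pi.add_apply]; ring)
    have hdiv := hP'd.div (hP 0) (ne_of_gt (hPpos 0))
    have := hdiv.neg
    refine this.congr_deriv ?_
    have h0 : P 0 = 1 + a*(p.re^2+p.im^2) := by
      show (1:ℝ) + a*((p.re + (0:ℝ)*e.re)^2 + (p.im + (0:ℝ)*e.im)^2) = _; ring
    have h0' : P' 0 = a*(2*(p.re*e.re) + 2*(p.im*e.im)) := by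
      show a*(2*(p.re + (0:ℝ)*e.re)*e.re + 2*(p.im + (0:ℝ)*e.im)*e.im) = _; ring
    rw [h0, h0']
    have hpos := hPpos 0
    rw [h0] at hpos
    rw [neg_inj, div_eq_div_iff (by positivity) (by positivity)]
    ring



theorem chart (f : ℂ → ℂ) (hf : MeromorphicNiceOn f (ball 0 1)) {z : ℂ} (hz : z ∈ ball (0:ℂ) 1) :
    ∃ h : ℂ → ℂ, AnalyticAt ℂ h z ∧
      ∀ᶠ w in 𝓝 z, sphDeriv f w = ‖deriv h w‖ / (1 + ‖h w‖^2) := by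
  by_cases hA : AnalyticAt ℂ f z
  · refine ⟨f, hA, ?_⟩
    filter_upwards [hA.eventually_analyticAt] with w hw
    unfold sphDeriv; rw [if_pos hw]
  · obtain ⟨hfz, hg⟩ := hf.2 z hz hA
    set g : ℂ → ℂ := fun w => (f w)⁻¹ with hgdef
    have hfg : ∀ v, f v = (g v)⁻¹ := fun v => (inv_inv (f v)).symm
    have hne : ¬ (∀ᶠ w in 𝓝 z, g w = 0) := by
      intro hev
      refine hA ((analyticAt_const (v := (0:ℂ))).congr ?_)
      filter_upwards [hev] with w hw
      exact (inv_eq_zero.mp hw).symm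
    have hg' : ∀ᶠ w in 𝓝 z, w ≠ z → g w ≠ 0 := by
      rcases hg.eventually_eq_zero_or_eventually_ne_zero with hc | hc
      · exact absurd hc hne
      · exact eventually_nhdsWithin_iff.mp hc
    refine ⟨g, hg, ?_⟩
    filter_upwards [hg.eventually_analyticAt, hg'] with w hw1 hw2
    by_cases hwz : w = z
    · subst hwz
      unfold sphDeriv; rw [if_neg hA]
    · have hgw : g w ≠ 0 := hw2 hwz
      have hfa : AnalyticAt ℂ f w :=
        (hw1.inv hgw).congr (Filter.Eventually.of_forall fun v => (hfg v).symm)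
      unfold sphDeriv; rw [if_pos hfa]
      have hfw : f w ≠ 0 := by rw [hfg w]; exact inv_ne_zero hgw
      have hdg : deriv g w = -deriv f w / (f w)^2 := by
        rw [hgdef]
        exact deriv_inv'' hfa.differentiableAt hfw
      have hngw : ‖g w‖ = ‖f w‖⁻¹ := by rw [hgdef]; simp
      have hnfw : ‖f w‖ ≠ 0 := norm_ne_zero_iff.2 hfw
      rw [hdg, hngw, norm_div, norm_neg, norm_pow]
      have habs : ‖f w‖ ≠ 0 := hnfw
      rw [div_eq_div_iff (by positivity) (by positivity)]
      field_simp
      ring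

theorem normsq2 (z : ℂ) : z.re^2 + z.im^2 = ‖z‖^2 := by
  rw [Complex.sq_norm, Complex.normSq_apply]; ring

noncomputable def uF (f : ℂ → ℂ) (z : ℂ) : ℝ := Real.log (sphDeriv f z)

noncomputable def vF (b μ : ℝ) (z : ℂ) : ℝ :=
  Real.log μ - Real.log (1 + (b*μ)^2*(z.re^2 + z.im^2))

set_option maxHeartbeats 2000000 in
theorem key (f : ℂ → ℂ) (hf : MeromorphicNiceOn f (ball 0 1)) {c t b : ℝ}
    (hc : 0 < c) (hlb : ∀ z ∈ ball (0:ℂ) 1, c ≤ sphDeriv f z)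
    (ht0 : 0 < t) (ht1 : t < 1) (hb0 : 0 < b) (hb1 : b < 1) :
    c ≤ 1/(2*b*t) := by
  have hK : closedBall (0:ℂ) t ⊆ ball (0:ℂ) 1 := closedBall_subset_ball ht1
  have hKc : IsCompact (closedBall (0:ℂ) t) := isCompact_closedBall _ _
  have h0K : (0:ℂ) ∈ closedBall (0:ℂ) t := by
    simp [mem_closedBall, le_of_lt ht0]
  have hKne : (closedBall (0:ℂ) t).Nonempty := ⟨0, h0K⟩
  have hpos : ∀ z ∈ ball (0:ℂ) 1, 0 < sphDeriv f z := fun z hz => lt_of_lt_of_le hc (hlb z hz)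
  let u : ℂ → ℝ := uF f
  have hudef : ∀ z, u z = Real.log (sphDeriv f z) := fun z => rfl
  have hcont : ∀ z ∈ ball (0:ℂ) 1, ContinuousAt (sphDeriv f) z := by
    intro z hz
    obtain ⟨h, hh, hev⟩ := chart f hf hz
    have hformula : ContinuousAt (fun w => ‖deriv h w‖ / (1 + ‖h w‖^2)) z := by
      apply ContinuousAt.div
      · exact (analyticAt_deriv' hh).continuousAt.norm
      · exact continuousAt_const.add ((hh.continuousAt.norm).pow 2)
      · positivity
    apply hformula.congr
    filter_upwards [hev] with w hw
    exact hw.symm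
  have hucont : ∀ z ∈ ball (0:ℂ) 1, ContinuousAt u z := fun z hz =>
    (Real.continuousAt_log (ne_of_gt (hpos z hz))).comp (hcont z hz)
  have huK : ContinuousOn u (closedBall (0:ℂ) t) :=
    fun z hz => (hucont z (hK hz)).continuousWithinAt
  have hulb : ∀ z ∈ closedBall (0:ℂ) t, Real.log c ≤ u z := fun z hz =>
    Real.log_le_log hc (hlb z (hK hz))
  -- the comparison family
  let v : ℝ → ℂ → ℝ := vF b
  have hvdef : ∀ μ z, v μ z = Real.log μ - Real.log (1 + (b*μ)^2*(z.re^2 + z.im^2)) :=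
    fun μ z => rfl
  have hDpos : ∀ (μ : ℝ) (z : ℂ), (0:ℝ) < 1 + (b*μ)^2*(z.re^2 + z.im^2) := by
    intro μ z; positivity
  have hvle : ∀ (μ : ℝ) (z : ℂ), v μ z ≤ Real.log μ := by
    intro μ z
    have h1 : (0:ℝ) ≤ Real.log (1 + (b*μ)^2*(z.re^2 + z.im^2)) :=
      Real.log_nonneg (by nlinarith [sq_nonneg (b*μ), sq_nonneg z.re, sq_nonneg z.im])
    rw [hvdef]; linarith
  have hvmono : ∀ (z : ℂ) (μ ν : ℝ), 0 < μ → μ ≤ ν → v ν z ≤ v μ z + Real.log (ν/μ) := by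
    intro z μ ν hμ hμν
    have hν : 0 < ν := lt_of_lt_of_le hμ hμν
    have h1 : Real.log (1 + (b*μ)^2*(z.re^2 + z.im^2)) ≤
        Real.log (1 + (b*ν)^2*(z.re^2 + z.im^2)) := by
      have hr2 : (0:ℝ) ≤ z.re^2 + z.im^2 := by positivity
      have hsq : (b*μ)^2 ≤ (b*ν)^2 := by
        have h1 : μ^2 ≤ ν^2 := by nlinarith
        calc (b*μ)^2 = b^2*μ^2 := by ring
        _ ≤ b^2*ν^2 := mul_le_mul_of_nonneg_left h1 (sq_nonneg b)
        _ = (b*ν)^2 := by ring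
      have := mul_le_mul_of_nonneg_right hsq hr2
      exact Real.log_le_log (hDpos μ z) (by linarith)
    rw [hvdef, hvdef, Real.log_div (ne_of_gt hν) (ne_of_gt hμ)]
    linarith
  -- constants
  have h0mem : (0:ℂ) ∈ ball (0:ℂ) 1 := by simp
  have hcΛ : c ≤ sphDeriv f 0 := hlb 0 h0mem
  set μ₁ : ℝ := c/2 with hμ₁def
  set M : ℝ := sphDeriv f 0 + 1 with hMdef
  have hμ₁pos : 0 < μ₁ := half_pos hc
  have hμ₁M : μ₁ ≤ M := by simp only [hμ₁def, hMdef]; linarith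
  set Qset : Set ℝ := {μ : ℝ | μ ∈ Icc μ₁ M ∧ ∃ z ∈ closedBall (0:ℂ) t, u z ≤ v μ z} with hQdef
  have hMQ : M ∈ Qset := by
    refine ⟨⟨hμ₁M, le_refl M⟩, 0, h0K, ?_⟩
    have hv0 : v M 0 = Real.log M := by
      rw [hvdef]
      simp only [Complex.zero_re, Complex.zero_im]
      norm_num
    rw [hv0, hudef]
    exact Real.log_le_log (hpos 0 h0mem) (by simp only [hMdef]; linarith)
  have hQbdd : BddBelow Qset := ⟨μ₁, fun μ hμ => hμ.1.1⟩
  have hQne : Qset.Nonempty := ⟨M, hMQ⟩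
  set μst : ℝ := sInf Qset with hμstdef
  have hμ₁le : μ₁ ≤ μst := le_csInf hQne (fun μ hμ => hμ.1.1)
  have hμstM : μst ≤ M := csInf_le hQbdd hMQ
  have hμstpos : 0 < μst := lt_of_lt_of_le hμ₁pos hμ₁le
  -- gap lemma
  have hgap : ∀ μh, 0 < μh → (∀ z ∈ closedBall (0:ℂ) t, v μh z < u z) →
      ∃ η > 0, ∀ μ, μh ≤ μ → μ < μh + η → ∀ z ∈ closedBall (0:ℂ) t, v μ z < u z := by
    intro μh hμhpos hstrict
    have hvcont : ContinuousOn (fun z => v μh z) (closedBall (0:ℂ) t) := by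
      show ContinuousOn (fun z => Real.log μh - Real.log (1 + (b*μh)^2*(z.re^2 + z.im^2)))
        (closedBall (0:ℂ) t)
      apply ContinuousOn.sub continuousOn_const
      apply ContinuousOn.log
      · apply Continuous.continuousOn
        continuity
      · intro z _
        exact ne_of_gt (hDpos μh z)
    obtain ⟨zm, hzmK, hzmmin⟩ := hKc.exists_isMinOn hKne (huK.sub hvcont)
    obtain ⟨δ, hδdef, hδpos⟩ : ∃ δ : ℝ, δ = u zm - v μh zm ∧ 0 < δ :=
      ⟨_, rfl, sub_pos.2 (hstrict zm hzmK)⟩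
    refine ⟨μh * (Real.exp δ - 1), ?_, ?_⟩
    · have h1 := Real.add_one_le_exp δ
      have h2 : 1 < Real.exp δ := by linarith
      exact mul_pos hμhpos (by linarith)
    · intro μ hμ1 hμ2 z hzK
      have h3 : v μ z ≤ v μh z + Real.log (μ/μh) := hvmono z μh μ hμhpos hμ1
      have h4 : Real.log (μ/μh) < δ := by
        have hμpos : 0 < μ := lt_of_lt_of_le hμhpos hμ1
        have h7 : μ/μh < Real.exp δ := by
          rw [div_lt_iff₀ hμhpos]
          nlinarith
        have h8 := Real.log_lt_log (by positivity) h7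
        rwa [Real.log_exp] at h8
      have h5 : δ ≤ u z - v μh z := by rw [hδdef]; exact hzmmin hzK
      linarith
  have hstrict₁ : ∀ z ∈ closedBall (0:ℂ) t, v μ₁ z < u z := by
    intro z hz
    calc v μ₁ z ≤ Real.log μ₁ := hvle μ₁ z
    _ < Real.log c := Real.log_lt_log hμ₁pos (by simp only [hμ₁def]; linarith)
    _ ≤ u z := hulb z hz
  obtain ⟨η₁, hη₁pos, hη₁⟩ := hgap μ₁ hμ₁pos hstrict₁
  have hμ₁lt : μ₁ + η₁ ≤ μst := by
    apply le_csInf hQne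
    intro q hq
    by_contra hq2
    push_neg at hq2
    obtain ⟨hqIcc, z, hzK, hle⟩ := hq
    exact absurd hle (not_le.2 (hη₁ q hqIcc.1 hq2 z hzK))
  have hμ₁lt' : μ₁ < μst := lt_of_lt_of_le (by linarith) hμ₁lt
  -- Claim A
  have hA : ∀ z ∈ closedBall (0:ℂ) t, v μst z ≤ u z := by
    intro z hz
    refine le_of_forall_pos_le_add ?_
    intro ε hε
    set μ : ℝ := max μ₁ (μst * Real.exp (-ε)) with hμdef
    have hexplt : Real.exp (-ε) < 1 := by
      rw [Real.exp_lt_one_iff]; linarith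
    have hμlt : μ < μst := by
      apply max_lt hμ₁lt'
      nlinarith
    have hμpos : 0 < μ := lt_of_lt_of_le hμ₁pos (le_max_left _ _)
    have hnotQ : μ ∉ Qset := notMem_of_lt_csInf hμlt hQbdd
    have hstrictμ : v μ z < u z := by
      by_contra hcon2
      push_neg at hcon2
      exact hnotQ ⟨⟨le_max_left _ _, by linarith [hμstM]⟩, z, hz, hcon2⟩
    have hlog : Real.log (μst/μ) ≤ ε := by
      rw [Real.log_le_iff_le_exp (by positivity), div_le_iff₀ hμpos]
      have h6 : μst * Real.exp (-ε) ≤ μ := le_max_right _ _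
      have h8 : Real.exp ε * (μst * Real.exp (-ε)) = μst := by
        rw [Real.exp_neg]
        have := Real.exp_pos ε
        field_simp
      nlinarith [Real.exp_pos ε]
    have h9 := hvmono z μ μst hμpos (le_of_lt hμlt)
    linarith
  -- Claim B
  have hB : ∃ z₀ ∈ closedBall (0:ℂ) t, u z₀ ≤ v μst z₀ := by
    by_contra hno
    push_neg at hno
    obtain ⟨η, hηpos, hη⟩ := hgap μst hμstpos hno
    obtain ⟨q, hqQ, hqlt⟩ := exists_lt_of_csInf_lt hQne
      (show sInf Qset < μst + η by rw [← hμstdef]; linarith)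
    have hq1 : μst ≤ q := by rw [hμstdef]; exact csInf_le hQbdd hqQ
    obtain ⟨hqIcc, z, hzK, hle⟩ := hqQ
    exact absurd hle (not_le.2 (hη q hq1 hqlt z hzK))
  obtain ⟨z₀, hz₀K, hz₀le⟩ := hB
  have heq : u z₀ = v μst z₀ := le_antisymm hz₀le (hA z₀ hz₀K)
  have hz₀ball : z₀ ∈ ball (0:ℂ) 1 := hK hz₀K
  have hsphz₀ : sphDeriv f z₀ = μst / (1 + (b*μst)^2*(z₀.re^2 + z₀.im^2)) := by
    have h1 := congrArg Real.exp heq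
    rw [hudef, hvdef, Real.exp_log (hpos z₀ hz₀ball), Real.exp_sub, Real.exp_log hμstpos,
      Real.exp_log (hDpos μst z₀)] at h1
    exact h1
  rcases eq_or_lt_of_le (mem_closedBall_zero_iff.mp hz₀K) with hzt | hzt
  · -- boundary case: ‖z₀‖ = t
    have hr2 : z₀.re^2 + z₀.im^2 = t^2 := by rw [normsq2, hzt]
    have h2 : c ≤ μst / (1 + (b*μst)^2*t^2) := by
      rw [← hr2, ← hsphz₀]
      exact hlb z₀ hz₀ball
    have h3 : μst / (1 + (b*μst)^2*t^2) ≤ 1/(2*b*t) := by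
      rw [div_le_div_iff₀ (by positivity) (by positivity)]
      nlinarith [sq_nonneg (1 - b*t*μst)]
    linarith
  · -- interior case
    exfalso
    obtain ⟨h, hh, hev⟩ := chart f hf hz₀ball
    have hsph0 : sphDeriv f z₀ = ‖deriv h z₀‖/(1+‖h z₀‖^2) := hev.self_of_nhds
    have hd : deriv h z₀ ≠ 0 := by
      intro h0
      have h2 := hpos z₀ hz₀ball
      rw [hsph0, h0] at h2
      simp at h2
    obtain ⟨T, hT⟩ := coreDir hh hd
    have hapos : (0:ℝ) < (b*μst)^2 := by positivity
    -- local minimum of u - v μst along directions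
    have hloc : ∀ e : ℂ, IsLocalMin (fun s : ℝ => u (z₀ + s*e) - v μst (z₀ + s*e)) 0 := by
      intro e
      have hγ0 : z₀ + ((0:ℝ):ℂ)*e = z₀ := by simp
      have hc2 : ContinuousAt (fun s : ℝ => z₀ + (s:ℂ)*e) 0 := by
        apply Continuous.continuousAt
        continuity
      have hz₀t : z₀ ∈ ball (0:ℂ) t := mem_ball_zero_iff.2 hzt
      have hmem : ∀ᶠ s : ℝ in 𝓝 0, (z₀ + (s:ℂ)*e) ∈ closedBall (0:ℂ) t := by
        have h5 := hc2.eventually_mem (isOpen_ball.mem_nhds (by rw [hγ0]; exact hz₀t))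
        filter_upwards [h5] with s hs
        exact ball_subset_closedBall hs
      filter_upwards [hmem] with s hs
      have h9 := hA _ hs
      show u (z₀ + ((0:ℝ):ℂ)*e) - v μst (z₀ + ((0:ℝ):ℂ)*e) ≤ u (z₀ + (s:ℂ)*e) - v μst (z₀ + (s:ℂ)*e)
      rw [hγ0, heq]
      linarith
    -- tendsto fact
    have htend : ∀ e : ℂ, Tendsto (fun s : ℝ => z₀ + (s:ℂ)*e) (𝓝 0) (𝓝 z₀) := by
      intro e
      have hγ0 : z₀ + ((0:ℝ):ℂ)*e = z₀ := by simp
      have hc2 : ContinuousAt (fun s : ℝ => z₀ + (s:ℂ)*e) 0 := by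
        apply Continuous.continuousAt
        continuity
      have h2 : Tendsto (fun s : ℝ => z₀ + (s:ℂ)*e) (𝓝 0) (𝓝 (z₀ + ((0:ℝ):ℂ)*e)) := hc2
      rwa [hγ0] at h2
    -- per-direction second derivative test
    have hper : ∀ e : ℂ, 0 ≤ ((T*e*e).re - aB (h z₀) (deriv h z₀) (deriv (deriv h) z₀) e)
        - (-(((b*μst)^2*(2*e.re^2 + 2*e.im^2) * (1 + (b*μst)^2*(z₀.re^2+z₀.im^2))
          - ((b*μst)^2*(2*(z₀.re*e.re) + 2*(z₀.im*e.im)))^2)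
            / (1 + (b*μst)^2*(z₀.re^2+z₀.im^2))^2)) := by
      intro e
      obtain ⟨g, hgev, hgd⟩ := hT e
      obtain ⟨gv, hgvev, hgvd⟩ := vDir ((b*μst)^2) μst hapos z₀ e
      refine secondDerivTest
        (φ := fun s : ℝ => Real.log (‖deriv h (z₀ + s*e)‖ / (1 + ‖h (z₀ + s*e)‖^2))
          - (Real.log μst - Real.log (1 + (b*μst)^2*(((z₀ + s*e).re)^2 + ((z₀ + s*e).im)^2))))
        (φ' := fun s => g s - gv s) ?_ (hgd.sub hgvd) ?_
      · filter_upwards [hgev] with s h1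
        exact h1.sub (hgvev s)
      · refine (hloc e).congr ?_
        filter_upwards [(htend e).eventually hev] with s hs
        show u (z₀ + (s:ℂ)*e) - v μst (z₀ + (s:ℂ)*e) = _
        rw [hudef, hvdef, hs]
    -- assemble the contradiction
    have hTI : T*Complex.I*Complex.I = -T := by
      rw [mul_assoc, Complex.I_mul_I, mul_neg_one]
    have habsum := aB_sum (h z₀) (deriv h z₀) (deriv (deriv h) z₀)
    rw [← hsph0] at habsum
    have hfinal : 0 ≤ -(4*(sphDeriv f z₀)^2)
        + 4*(b*μst)^2/(1 + (b*μst)^2*(z₀.re^2+z₀.im^2))^2 := by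
      have hsum0 := add_nonneg (hper 1) (hper Complex.I)
      calc (0:ℝ) ≤ _ := hsum0
      _ = -(4*(sphDeriv f z₀)^2)
          + 4*(b*μst)^2/(1 + (b*μst)^2*(z₀.re^2+z₀.im^2))^2 := by
        rw [hTI]
        simp only [Complex.one_re, Complex.one_im, Complex.I_re, Complex.I_im, mul_one,
          Complex.neg_re]
        rw [← habsum]
        ring
    obtain ⟨D, hDdef⟩ : ∃ D : ℝ, D = 1 + (b*μst)^2*(z₀.re^2+z₀.im^2) := ⟨_, rfl⟩
    rw [← hDdef] at hsphz₀ hfinal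
    have hDpos'' : 0 < D := by
      rw [hDdef]; exact hDpos μst z₀
    have hρpos : 0 < sphDeriv f z₀ := hpos z₀ hz₀ball
    have hρD : sphDeriv f z₀ * D = μst := by
      rw [hsphz₀]; field_simp
    have h6 : 4*(sphDeriv f z₀)^2 ≤ 4*(b*μst)^2/D^2 := by linarith [hfinal]
    have h5 : 4*(sphDeriv f z₀)^2 * D^2 ≤ 4*(b*μst)^2 := (le_div_iff₀ (by positivity)).mp h6
    have h7 : (b*μst)^2 = b^2*(sphDeriv f z₀)^2*D^2 := by rw [← hρD]; ring
    rw [h7] at h5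
    have h8 : 0 < (sphDeriv f z₀)^2*D^2 := mul_pos (pow_pos hρpos 2) (pow_pos hDpos'' 2)
    have hb2 : b^2 < 1 := by nlinarith
    have h9 : 0 < (sphDeriv f z₀^2*D^2) * (1 - b^2) := mul_pos h8 (by linarith)
    nlinarith [h5, h9]


set_option maxHeartbeats 1000000 in
/-- Every function meromorphic on the unit disk satisfies
`inf_{z ∈ 𝔻} f^#(z) ≤ 1/2`. -/
theorem inf_sphDeriv_le_half (f : ℂ → ℂ)
    (hf : MeromorphicNiceOn f (ball (0 : ℂ) 1)) :
    (⨅ z : ball (0 : ℂ) 1, sphDeriv f z) ≤ 1 / 2 := by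
  by_contra hcon
  push_neg at hcon
  have hbdd : BddBelow (Set.range fun z : ball (0:ℂ) 1 => sphDeriv f (z : ℂ)) := by
    refine ⟨0, ?_⟩
    rintro x ⟨z, rfl⟩
    show (0:ℝ) ≤ sphDeriv f (z : ℂ)
    unfold sphDeriv
    split <;> positivity
  obtain ⟨c, hcdef⟩ : ∃ c : ℝ, c = ⨅ z : ball (0:ℂ) 1, sphDeriv f (z : ℂ) := ⟨_, rfl⟩
  rw [← hcdef] at hcon
  have hlb : ∀ z ∈ ball (0:ℂ) 1, c ≤ sphDeriv f z := by
    intro z hz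
    rw [hcdef]
    exact ciInf_le hbdd (⟨z, hz⟩ : ball (0:ℂ) 1)
  have hc : 0 < c := lt_trans one_half_pos hcon
  have h2c : 1/(2*c) < 1 := by
    rw [div_lt_one (by linarith)]
    linarith
  have h2cpos : 0 < 1/(2*c) := by positivity
  obtain ⟨s0, hs0⟩ : ∃ s0 : ℝ, s0 = (1/(2*c) + 1)/2 := ⟨_, rfl⟩
  have hs0a : 1/(2*c) < s0 := by rw [hs0]; linarith
  have hs0b : s0 < 1 := by rw [hs0]; linarith
  have hs0pos : 0 < s0 := lt_trans h2cpos hs0a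
  obtain ⟨t, htdef⟩ : ∃ t : ℝ, t = Real.sqrt s0 := ⟨_, rfl⟩
  have ht0 : 0 < t := by rw [htdef]; exact Real.sqrt_pos.2 hs0pos
  have ht1 : t < 1 := by
    rw [htdef, show (1:ℝ) = Real.sqrt 1 from (Real.sqrt_one).symm]
    exact Real.sqrt_lt_sqrt (le_of_lt hs0pos) hs0b
  have htsq : t*t = s0 := by rw [htdef]; exact Real.mul_self_sqrt (le_of_lt hs0pos)
  have hkey := key f hf hc hlb ht0 ht1 ht0 ht1
  have hlt : 1/(2*t*t) < c := by
    have h3 : 2*t*t = 2*s0 := by rw [mul_assoc, htsq]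
    rw [h3, div_lt_iff₀ (by positivity)]
    have h4 : 1 < 2*c*s0 := by
      rw [div_lt_iff₀ (by positivity)] at hs0a
      nlinarith
    nlinarith
  linarith
end

section
/- Minimum principle for the spherical derivative: let f be meromorphic on the open unit disk 𝔻. If the spherical derivative f^# attains a local minimum at a point z₀ ∈ 𝔻, then f^#(z₀) = 0. -/
open Complex Metric Set Filter Topology
open scoped Classical

lemma my_normSq_identity (a u : ℂ) :
    Complex.normSq (1 + (starRingEnd ℂ) a * u) + Complex.normSq (u - a)
      = (1 + Complex.normSq a) * (1 + Complex.normSq u) := by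
  simp only [Complex.normSq_apply, Complex.add_re, Complex.add_im, Complex.mul_re,
    Complex.mul_im, Complex.conj_re, Complex.conj_im, Complex.sub_re, Complex.sub_im,
    Complex.one_re, Complex.one_im]
  ring

lemma my_norm_sq_eq (z : ℂ) : ‖z‖ ^ 2 = Complex.normSq z := by
  rw [← Complex.normSq_eq_norm_sq]

lemma my_analyticAt_deriv {g : ℂ → ℂ} {z₀ : ℂ} (h : AnalyticAt ℂ g z₀) :
    AnalyticAt ℂ (deriv g) z₀ := by
  have h1 : AnalyticAt ℂ (fderiv ℂ g) z₀ := h.fderiv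
  have h2 : AnalyticAt ℂ (fun z => fderiv ℂ g z 1) z₀ :=
    ((ContinuousLinearMap.apply ℂ ℂ (1 : ℂ)).analyticAt _).comp h1
  exact h2.congr (Filter.Eventually.of_forall fun z => (fderiv_apply_one_eq_deriv).symm)

/-- Spherical-derivative formula is invariant under taking reciprocals. -/
lemma my_inv_formula {φ : ℂ → ℂ} {z : ℂ} (hd : DifferentiableAt ℂ φ z) (h0 : φ z ≠ 0) :
    ‖deriv (fun w => (φ w)⁻¹) z‖ / (1 + ‖(φ z)⁻¹‖ ^ 2)
      = ‖deriv φ z‖ / (1 + ‖φ z‖ ^ 2) := by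
  rw [show (fun w => (φ w)⁻¹) = φ⁻¹ from rfl, deriv_inv'' hd h0]
  have ht : (0:ℝ) < ‖φ z‖ := norm_pos_iff.mpr h0
  have ht' : ‖φ z‖ ≠ 0 := ne_of_gt ht
  rw [norm_div, norm_neg, norm_pow, norm_inv, div_div]
  have h2 : ‖φ z‖ ^ 2 * (1 + ‖φ z‖⁻¹ ^ 2) = 1 + ‖φ z‖ ^ 2 := by
    rw [mul_add, mul_one, ← mul_pow, mul_inv_cancel₀ ht', one_pow, add_comm]
  rw [h2]

lemma my_mobius_hasDerivAt {a g' : ℂ} {g : ℂ → ℂ} {z : ℂ} (hg : HasDerivAt g g' z)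
    (hv : 1 + (starRingEnd ℂ) a * g z ≠ 0) :
    HasDerivAt (fun w => (g w - a) / (1 + (starRingEnd ℂ) a * g w))
      (g' * (1 + (starRingEnd ℂ) a * a) / (1 + (starRingEnd ℂ) a * g z) ^ 2) z := by
  have hu : HasDerivAt (fun w => g w - a) g' z := hg.sub_const a
  have hv' : HasDerivAt (fun w => 1 + (starRingEnd ℂ) a * g w)
      ((starRingEnd ℂ) a * g') z := (hg.const_mul _).const_add 1
  have h := hu.div hv' hv
  refine HasDerivAt.congr_deriv h ?_
  congr 1
  ring

lemma my_mobius_norm {a : ℂ} {g : ℂ → ℂ} {z : ℂ} (hd : DifferentiableAt ℂ g z)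
    (hv : 1 + (starRingEnd ℂ) a * g z ≠ 0) :
    ‖deriv (fun w => (g w - a) / (1 + (starRingEnd ℂ) a * g w)) z‖
      / (1 + ‖(g z - a) / (1 + (starRingEnd ℂ) a * g z)‖ ^ 2)
      = ‖deriv g z‖ / (1 + ‖g z‖ ^ 2) := by
  have hD := my_mobius_hasDerivAt hd.hasDerivAt hv
  rw [hD.deriv, norm_div, norm_mul, norm_pow, norm_div]
  have h1a : ‖1 + (starRingEnd ℂ) a * a‖ = 1 + ‖a‖ ^ 2 := by
    have h := Complex.mul_conj a
    rw [mul_comm] at h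
    rw [h, my_norm_sq_eq]
    rw [← Complex.ofReal_one, ← Complex.ofReal_add, Complex.norm_real]
    exact abs_of_nonneg (by linarith [Complex.normSq_nonneg a])
  rw [h1a]
  set N := ‖deriv g z‖
  set A := ‖a‖ ^ 2 with hA
  set G := ‖g z‖ ^ 2 with hG
  set V := ‖1 + (starRingEnd ℂ) a * g z‖ with hVdef
  set U := ‖g z - a‖ with hUdef
  have hV0 : 0 < V := norm_pos_iff.mpr hv
  have hkey : V ^ 2 + U ^ 2 = (1 + A) * (1 + G) := by
    rw [hVdef, hUdef, hA, hG, my_norm_sq_eq, my_norm_sq_eq, my_norm_sq_eq, my_norm_sq_eq]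
    exact my_normSq_identity a (g z)
  have hA0 : (0:ℝ) ≤ A := by rw [hA]; positivity
  have hG0 : (0:ℝ) ≤ G := by rw [hG]; positivity
  have hN0 : (0:ℝ) ≤ N := norm_nonneg _
  field_simp
  nlinarith [hkey, sq_nonneg V, sq_nonneg U, hV0]

lemma my_key {g : ℂ → ℂ} {z₀ : ℂ} (hg : AnalyticAt ℂ g z₀)
    (hmin : IsLocalMin (fun z => ‖deriv g z‖ / (1 + ‖g z‖ ^ 2)) z₀) :
    deriv g z₀ = 0 := by
  by_contra hne
  have hmin' : ∀ᶠ z in 𝓝 z₀,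
      ‖deriv g z₀‖ / (1 + ‖g z₀‖ ^ 2) ≤ ‖deriv g z‖ / (1 + ‖g z‖ ^ 2) := hmin
  set a := g z₀ with ha
  set s := ‖deriv g z₀‖ / (1 + ‖a‖ ^ 2) with hs
  have hspos : 0 < s := by
    rw [hs]
    apply div_pos (norm_pos_iff.mpr hne) (by positivity)
  have hv₀ : 1 + (starRingEnd ℂ) a * g z₀ ≠ 0 := by
    rw [← ha]
    have h := Complex.mul_conj a; rw [mul_comm] at h
    rw [h]
    intro hcontra
    have h2 : ((1 + Complex.normSq a : ℝ) : ℂ) = 0 := by push_cast; linear_combination hcontra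
    rw [Complex.ofReal_eq_zero] at h2
    nlinarith [Complex.normSq_nonneg a]
  set h : ℂ → ℂ := fun w => (g w - a) / (1 + (starRingEnd ℂ) a * g w) with hhdef
  have hha : AnalyticAt ℂ h z₀ :=
    (hg.sub analyticAt_const).div (analyticAt_const.add (analyticAt_const.mul hg)) hv₀
  have hd'' : ∀ᶠ z in 𝓝 z₀, DifferentiableAt ℂ (deriv h) z :=
    (my_analyticAt_deriv hha).eventually_analyticAt.mono fun z hz => hz.differentiableAt
  have hgd : ∀ᶠ z in 𝓝 z₀, DifferentiableAt ℂ g z :=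
    hg.eventually_analyticAt.mono fun z hz => hz.differentiableAt
  have hvne : ∀ᶠ z in 𝓝 z₀, 1 + (starRingEnd ℂ) a * g z ≠ 0 :=
    (continuousAt_const.add (continuousAt_const.mul hg.continuousAt)).eventually_ne hv₀
  have hnorm : ∀ z, DifferentiableAt ℂ g z → 1 + (starRingEnd ℂ) a * g z ≠ 0 →
      ‖deriv h z‖ / (1 + ‖h z‖ ^ 2) = ‖deriv g z‖ / (1 + ‖g z‖ ^ 2) := by
    intro z h1 h2
    rw [hhdef]
    exact my_mobius_norm h1 h2
  have hz₀norm : ‖deriv h z₀‖ = s := by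
    have h1 := hnorm z₀ hg.differentiableAt hv₀
    have hh0 : h z₀ = 0 := by rw [hhdef]; simp [← ha]
    rw [hh0, ← ha] at h1
    simpa [hs] using h1
  have hlm : IsLocalMin (norm ∘ deriv h) z₀ := by
    have : ∀ᶠ z in 𝓝 z₀, (norm ∘ deriv h) z₀ ≤ (norm ∘ deriv h) z := by
      filter_upwards [hmin', hgd, hvne] with z h1 h2 h3
      simp only [Function.comp_apply]
      rw [hz₀norm]
      calc s ≤ ‖deriv g z‖ / (1 + ‖g z‖ ^ 2) := by rw [hs, ha]; exact h1
        _ = ‖deriv h z‖ / (1 + ‖h z‖ ^ 2) := (hnorm z h2 h3).symm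
        _ ≤ ‖deriv h z‖ := div_le_self (norm_nonneg _) (by nlinarith [sq_nonneg ‖h z‖])
    exact this
  rcases Complex.eventually_eq_or_eq_zero_of_isLocalMin_norm hd'' hlm with hconst | h0
  · have hzero : ∀ᶠ z in 𝓝 z₀, h z = 0 := by
      filter_upwards [hconst, hmin', hgd, hvne] with z h1 h2 h3 h4
      have e1 : ‖deriv h z‖ = s := by rw [h1, hz₀norm]
      have e2 : s ≤ ‖deriv h z‖ / (1 + ‖h z‖ ^ 2) := by
        rw [hnorm z h3 h4]; rw [hs, ha]; exact h2
      rw [e1] at e2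
      have hden : (0:ℝ) < 1 + ‖h z‖ ^ 2 := by positivity
      have e3 : s * (1 + ‖h z‖ ^ 2) ≤ s := (le_div_iff₀ hden).mp e2
      have e4 : ‖h z‖ ^ 2 ≤ 0 := by nlinarith
      have e5 : ‖h z‖ = 0 := by nlinarith [sq_nonneg ‖h z‖, norm_nonneg (h z)]
      exact norm_eq_zero.mp e5
    have hd0 : deriv h z₀ = 0 := by
      have h2 : deriv h z₀ = deriv (fun _ : ℂ => (0:ℂ)) z₀ := by
        apply Filter.EventuallyEq.deriv_eq
        filter_upwards [hzero] with z hz using hz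
      simpa using h2
    rw [hd0, norm_zero] at hz₀norm
    linarith
  · rw [h0, norm_zero] at hz₀norm
    linarith
/-- **Minimum principle for the spherical derivative.**
If `f` is meromorphic on the unit disk and `f^#` attains a local minimum at
`z₀ ∈ 𝔻`, then `f^#(z₀) = 0`. -/
theorem sphDeriv_eq_zero_of_isLocalMin (f : ℂ → ℂ)
    (hf : MeromorphicNiceOn f (ball (0 : ℂ) 1))
    (z₀ : ℂ) (hz₀ : z₀ ∈ ball (0 : ℂ) 1)
    (hmin : IsLocalMin (sphDeriv f) z₀) :
    sphDeriv f z₀ = 0 := by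
  have hminE : ∀ᶠ z in 𝓝 z₀, sphDeriv f z₀ ≤ sphDeriv f z := hmin
  by_cases hA : AnalyticAt ℂ f z₀
  · have hev : ∀ᶠ z in 𝓝 z₀, sphDeriv f z = ‖deriv f z‖ / (1 + ‖f z‖ ^ 2) := by
      filter_upwards [hA.eventually_analyticAt] with z hz
      simp [sphDeriv, hz]
    have heq0 : sphDeriv f z₀ = ‖deriv f z₀‖ / (1 + ‖f z₀‖ ^ 2) := hev.self_of_nhds
    have hmin' : IsLocalMin (fun z => ‖deriv f z‖ / (1 + ‖f z‖ ^ 2)) z₀ := by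
      show ∀ᶠ z in 𝓝 z₀, _ ≤ _
      filter_upwards [hminE, hev] with z h1 h2
      rw [← h2, ← heq0]; exact h1
    have h0 := my_key hA hmin'
    rw [heq0, h0, norm_zero, zero_div]
  · obtain ⟨hf0, hFa⟩ := hf.2 z₀ hz₀ hA
    set F : ℂ → ℂ := fun w => (f w)⁻¹ with hF
    have hfF : f = fun w => (F w)⁻¹ := funext fun w => (inv_inv (f w)).symm
    have hFne : ¬ (∀ᶠ z in 𝓝 z₀, F z = 0) := by
      intro hcon
      apply hA
      have hev0 : ∀ᶠ z in 𝓝 z₀, (fun _ : ℂ => (0:ℂ)) z = f z := by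
        filter_upwards [hcon] with z hz
        rw [hfF]; simp [hz]
      exact analyticAt_const.congr hev0
    have hne : ∀ᶠ z in 𝓝[≠] z₀, F z ≠ 0 :=
      hFa.eventually_eq_zero_or_eventually_ne_zero.resolve_left hFne
    rw [eventually_nhdsWithin_iff] at hne
    have hev : ∀ᶠ z in 𝓝 z₀, sphDeriv f z = ‖deriv F z‖ / (1 + ‖F z‖ ^ 2) := by
      filter_upwards [hne, hFa.eventually_analyticAt] with z h1 h2
      by_cases hz : z = z₀
      · subst hz
        simp only [sphDeriv, hA, if_neg, if_false, hF]
      · have hFz : F z ≠ 0 := h1 (by simpa using hz)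
        have hfz : f z ≠ 0 := by rw [hfF]; simpa using hFz
        have hfa : AnalyticAt ℂ f z := by rw [hfF]; exact h2.inv hFz
        have hinv := my_inv_formula (φ := F) h2.differentiableAt hFz
        simp only [sphDeriv, hfa, if_true, if_pos]
        rw [← hinv]
        have hfF2 : (fun w => (F w)⁻¹) = f := hfF.symm
        rw [hfF2, show (F z)⁻¹ = f z from by rw [hfF]]
    have heq0 : sphDeriv f z₀ = ‖deriv F z₀‖ / (1 + ‖F z₀‖ ^ 2) := hev.self_of_nhds
    have hmin' : IsLocalMin (fun z => ‖deriv F z‖ / (1 + ‖F z‖ ^ 2)) z₀ := by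
      show ∀ᶠ z in 𝓝 z₀, _ ≤ _
      filter_upwards [hminE, hev] with z h1 h2
      rw [← h2, ← heq0]; exact h1
    have h0 := my_key hFa hmin'
    rw [heq0, h0, norm_zero, zero_div]
end

section
/- Let ε > 0 and let ℱ be the family of all functions f holomorphic (analytic) on the open unit disk 𝔻 such that f^#(z) ≥ ε for all z ∈ 𝔻. Then ℱ is a normal family in 𝔻. -/
open Complex Metric Set Filter Topology
open scoped Classical

open scoped BoundedContinuousFunction

private lemma arctan_mvt' {x y : ℝ} (hy : 0 ≤ y) (hxy : y ≤ x) :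
    Real.arctan y + (x - y) / (1 + x ^ 2) ≤ Real.arctan x := by
  rcases eq_or_lt_of_le hxy with rfl | hlt
  · simp
  obtain ⟨c, hc, hceq⟩ := exists_hasDerivAt_eq_slope Real.arctan (fun c => 1/(1+c^2)) hlt
    (Real.continuous_arctan.continuousOn) (fun c _ => Real.hasDerivAt_arctan c)
  have hc0 : 0 ≤ c := hy.trans hc.1.le
  rw [div_eq_div_iff (by positivity) (by linarith : (0:ℝ) < x - y).ne'] at hceq
  have h1 : Real.arctan x - Real.arctan y = (x - y) / (1 + c^2) := by
    rw [eq_div_iff (by positivity)]; linarith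
  have h2 : (x - y) / (1 + x ^ 2) ≤ (x - y) / (1 + c ^ 2) := by
    gcongr
    · nlinarith [hc.2, hc0]
  linarith

private lemma exists_dir (a : ℂ) : ∃ e : ℂ, ‖e‖ = 1 ∧ ∀ s : ℝ, 0 ≤ s → ‖a + s • e‖ = ‖a‖ + s := by
  rcases eq_or_ne a 0 with rfl | ha
  · exact ⟨1, by simp, fun s hs => by
      simp [norm_smul, Real.norm_eq_abs, _root_.abs_of_nonneg hs]⟩
  · have hna : ‖a‖ ≠ 0 := norm_ne_zero_iff.2 ha
    refine ⟨‖a‖⁻¹ • a, ?_, fun s hs => ?_⟩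
    · rw [norm_smul, norm_inv, norm_norm, inv_mul_cancel₀ hna]
    · have h0 : a + s • ‖a‖⁻¹ • a = ((1 + s * ‖a‖⁻¹ : ℝ)) • a := by
        rw [smul_smul, add_smul, one_smul]
      have hpos : (0:ℝ) ≤ 1 + s * ‖a‖⁻¹ := by positivity
      rw [h0, norm_smul, Real.norm_eq_abs, _root_.abs_of_nonneg hpos]
      rw [mul_comm, mul_add, mul_one, mul_comm s _, ← mul_assoc, mul_inv_cancel₀ hna, one_mul]


private lemma local_step {f : ℂ → ℂ} {z d : ℂ} {ε η : ℝ} (hε : 0 < ε) (hη : 0 < η)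
    (hf : HasDerivAt f d z) (hd : ε * (1 + ‖f z‖ ^ 2) ≤ ‖d‖) :
    ∀ᶠ δ in 𝓝[>] (0:ℝ), ∃ w : ℂ, dist w z ≤ δ ∧
      Real.arctan ‖f z‖ + (ε - η) * δ ≤ Real.arctan ‖f w‖ := by
  have hy0 : (0:ℝ) ≤ ‖f z‖ := norm_nonneg _
  have hdpos : 0 < ‖d‖ := lt_of_lt_of_le (by nlinarith) hd
  have hd0 : d ≠ 0 := norm_pos_iff.1 hdpos
  obtain ⟨e, he1, heAdd⟩ := exists_dir (f z)
  have he0 : e ≠ 0 := by intro h; rw [h] at he1; simp at he1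
  set v : ℂ := ((‖d‖ : ℂ) * e) / d with hv_def
  have hvd : v * d = (‖d‖ : ℂ) * e := by rw [hv_def, div_mul_cancel₀ _ hd0]
  have hv1 : ‖v‖ = 1 := by
    rw [hv_def, norm_div, norm_mul, Complex.norm_real, Real.norm_eq_abs,
      _root_.abs_of_nonneg hdpos.le, he1, mul_one, div_self hdpos.ne']
  -- the composite path
  have hγ : HasDerivAt (fun δ : ℝ => z + δ • v) v 0 := by
    simpa using ((hasDerivAt_id (0:ℝ)).smul_const v).const_add z
  have hF : HasDerivAt (fun δ : ℝ => f (z + δ • v)) (v * d) 0 := by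
    have := HasDerivAt.scomp (0:ℝ)
      (show HasDerivAt f d (z + (0:ℝ) • v) by simpa using hf) hγ
    simpa [smul_eq_mul, Function.comp_def] using this
  set η₂ : ℝ := min (η/2) (ε/2) with hη₂_def
  have hη₂pos : 0 < η₂ := lt_min (by linarith) (by linarith)
  have hη₂d : η₂ ≤ ‖d‖ := le_trans (le_trans (min_le_right _ _) (by nlinarith)) hd
  have hlo := (hasDerivAt_iff_isLittleO.mp hF).def hη₂pos
  simp only [zero_smul, add_zero, sub_zero] at hlo
  have hlo' : ∀ᶠ δ in 𝓝[>] (0:ℝ),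
      ‖f (z + δ • v) - f z - δ • (v * d)‖ ≤ η₂ * ‖δ‖ := hlo.filter_mono nhdsWithin_le_nhds
  -- continuity part
  set G : ℝ → ℝ := fun δ => (‖d‖ - η₂) / (1 + (‖f z‖ + δ * (‖d‖ + η₂)) ^ 2) with hG_def
  have hG0 : ε - η < G 0 := by
    have h1 : G 0 = (‖d‖ - η₂) / (1 + ‖f z‖ ^ 2) := by simp [hG_def]
    have h2 : (ε * (1 + ‖f z‖ ^ 2) - η₂) / (1 + ‖f z‖ ^ 2) ≤ G 0 := by
      rw [h1]; gcongr <;> linarith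
    have h3 : (ε * (1 + ‖f z‖ ^ 2) - η₂) / (1 + ‖f z‖ ^ 2) = ε - η₂ / (1 + ‖f z‖ ^ 2) := by
      field_simp
    have h4 : η₂ / (1 + ‖f z‖ ^ 2) ≤ η₂ := by
      rw [div_le_iff₀ (by positivity)]; nlinarith
    have h5 : η₂ ≤ η / 2 := min_le_left _ _
    linarith
  have hGcont : ContinuousAt G 0 := by
    apply ContinuousAt.div
    · exact continuousAt_const
    · fun_prop
    · positivity
  have hGev : ∀ᶠ δ in 𝓝[>] (0:ℝ), ε - η < G δ :=
    (hGcont.eventually (lt_mem_nhds hG0)).filter_mono nhdsWithin_le_nhds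
  filter_upwards [hlo', hGev, self_mem_nhdsWithin] with δ h1 h2 (hδ : 0 < δ)
  refine ⟨z + δ • v, ?_, ?_⟩
  · rw [dist_eq_norm, add_sub_cancel_left, norm_smul, hv1, mul_one, Real.norm_eq_abs,
      _root_.abs_of_nonneg hδ.le]
  · set w := z + δ • v with hw
    have hkey : f z + δ • (v * d) = f z + (δ * ‖d‖) • e := by
      rw [hvd]; congr 1
      rw [← smul_mul_assoc, Complex.real_smul, Complex.real_smul, Complex.ofReal_mul]
    have hnorm1 : ‖f z + δ • (v * d)‖ = ‖f z‖ + δ * ‖d‖ := by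
      rw [hkey]; exact heAdd _ (by positivity)
    have hub : ‖f w‖ ≤ ‖f z‖ + δ * (‖d‖ + η₂) := by
      have hsplit : f w = (f z + δ • (v * d)) + (f w - f z - δ • (v * d)) := by ring
      calc ‖f w‖ ≤ ‖f z + δ • (v * d)‖ + ‖f w - f z - δ • (v * d)‖ := by
            conv_lhs => rw [hsplit]
            exact norm_add_le _ _
        _ ≤ (‖f z‖ + δ * ‖d‖) + η₂ * ‖δ‖ := by rw [hnorm1]; gcongr <;> exact h1
        _ = ‖f z‖ + δ * (‖d‖ + η₂) := by
            rw [Real.norm_eq_abs, _root_.abs_of_nonneg hδ.le]; ring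
    have hlb : ‖f z‖ + δ * (‖d‖ - η₂) ≤ ‖f w‖ := by
      have := norm_sub_norm_le (f z + δ • (v * d)) (f z + δ • (v * d) - f w)
      have h1' : ‖f z + δ • (v * d) - f w‖ ≤ η₂ * δ := by
        rw [← norm_neg]
        have : -(f z + δ • (v * d) - f w) = f w - f z - δ • (v * d) := by ring
        rw [this]
        calc ‖f w - f z - δ • (v * d)‖ ≤ η₂ * ‖δ‖ := h1
          _ = η₂ * δ := by rw [Real.norm_eq_abs, _root_.abs_of_nonneg hδ.le]
      have h2' : f z + δ • (v * d) - (f z + δ • (v * d) - f w) = f w := by ring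
      rw [h2', hnorm1] at this
      linarith
    have hxy : ‖f z‖ ≤ ‖f w‖ := le_trans (by nlinarith) hlb
    have hmvt := arctan_mvt' hy0 hxy
    have hstep : δ * (‖d‖ - η₂) / (1 + (‖f z‖ + δ * (‖d‖ + η₂)) ^ 2)
        ≤ (‖f w‖ - ‖f z‖) / (1 + ‖f w‖ ^ 2) := by
      apply div_le_div₀ (by linarith) (by linarith) (by positivity)
      have : (0:ℝ) ≤ ‖f w‖ := norm_nonneg _
      nlinarith [hub]
    have hGe : δ * (ε - η) ≤ δ * (‖d‖ - η₂) / (1 + (‖f z‖ + δ * (‖d‖ + η₂)) ^ 2) := by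
      have : δ * (ε - η) ≤ δ * G δ := by
        apply mul_le_mul_of_nonneg_left (le_of_lt h2) hδ.le
      calc δ * (ε - η) ≤ δ * G δ := this
        _ = δ * (‖d‖ - η₂) / (1 + (‖f z‖ + δ * (‖d‖ + η₂)) ^ 2) := by
            rw [hG_def]; ring
    have : Real.arctan ‖f z‖ + δ * (ε - η) ≤ Real.arctan ‖f w‖ := by linarith
    linarith [this, mul_comm δ (ε - η)]

private lemma arctan_bound {f : ℂ → ℂ} {ε : ℝ} (hε : 0 < ε)
    (hf : DifferentiableOn ℂ f (ball (0:ℂ) 1))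
    (hsd : ∀ z ∈ ball (0:ℂ) 1, ε * (1 + ‖f z‖ ^ 2) ≤ ‖deriv f z‖)
    {r : ℝ} (hr : r < 1) {z : ℂ} (hz : ‖z‖ ≤ r) :
    Real.arctan ‖f z‖ + ε / 2 * ((1 - r) / 2) ≤ Real.pi / 2 := by
  have hr0 : 0 ≤ r := (norm_nonneg z).trans hz
  set R : ℝ := (1 - r) / 2 with hR_def
  have hRpos : 0 < R := by rw [hR_def]; linarith
  have hsub : ∀ w : ℂ, dist w z ≤ R → w ∈ ball (0:ℂ) 1 := by
    intro w hw
    rw [mem_ball, dist_zero_right]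
    calc ‖w‖ ≤ dist w z + ‖z‖ := by
          rw [dist_eq_norm]
          simpa using norm_add_le (w - z) z
      _ ≤ R + r := add_le_add hw hz
      _ < 1 := by rw [hR_def]; linarith
  set c : ℝ := ε / 2 with hc_def
  set S : Set ℝ := {t | t ∈ Icc 0 R ∧ ∃ w : ℂ, dist w z ≤ t ∧
    Real.arctan ‖f z‖ + c * t ≤ Real.arctan ‖f w‖} with hS_def
  have h0S : (0:ℝ) ∈ S := ⟨⟨le_refl 0, hRpos.le⟩, z, by simp⟩
  have hbdd : BddAbove S := ⟨R, fun t ht => ht.1.2⟩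
  have hSne : S.Nonempty := ⟨0, h0S⟩
  set T : ℝ := sSup S with hT_def
  have hT0 : 0 ≤ T := le_csSup hbdd h0S
  have hTR : T ≤ R := csSup_le hSne fun t ht => ht.1.2
  -- continuity of the potential
  have hcont : ∀ w ∈ closedBall z R, ContinuousAt (fun x : ℂ => Real.arctan ‖f x‖) w := by
    intro w hw
    have hwb : w ∈ ball (0:ℂ) 1 := hsub w (by rwa [mem_closedBall] at hw)
    have : ContinuousAt f w :=
      (hf.differentiableAt (isOpen_ball.mem_nhds hwb)).continuousAt
    exact (Real.continuous_arctan.continuousAt).comp ((continuous_norm.continuousAt).comp this)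
  -- T ∈ S
  have hTS : T ∈ S := by
    obtain ⟨u, hu_mono, hu_tend, hu_mem⟩ := exists_seq_tendsto_sSup hSne hbdd
    choose w hw1 hw2 using fun n => (hu_mem n).2
    have hwball : ∀ n, w n ∈ closedBall z R :=
      fun n => mem_closedBall.2 ((hw1 n).trans (hu_mem n).1.2)
    obtain ⟨w₀, hw₀, φ, hφ, hwconv⟩ := (isCompact_closedBall z R).tendsto_subseq hwball
    have huφ : Tendsto (fun j => u (φ j)) atTop (𝓝 T) := hu_tend.comp hφ.tendsto_atTop
    refine ⟨⟨hT0, hTR⟩, w₀, ?_, ?_⟩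
    · refine le_of_tendsto_of_tendsto' (hwconv.dist tendsto_const_nhds) huφ fun j => ?_
      exact (hw1 (φ j)).trans (le_refl _)
    · have hrhs : Tendsto (fun j => Real.arctan ‖f (w (φ j))‖) atTop
          (𝓝 (Real.arctan ‖f w₀‖)) := ((hcont w₀ hw₀).tendsto).comp hwconv
      have hlhs : Tendsto (fun j => Real.arctan ‖f z‖ + c * u (φ j)) atTop
          (𝓝 (Real.arctan ‖f z‖ + c * T)) :=
        (tendsto_const_nhds.add (huφ.const_mul c))
      exact le_of_tendsto_of_tendsto' hlhs hrhs fun j => hw2 (φ j)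
  -- T = R
  have hTeq : T = R := by
    by_contra hne
    have hTR' : T < R := lt_of_le_of_ne hTR hne
    obtain ⟨_, w₀, hw₀d, hw₀a⟩ := hTS
    have hw₀b : w₀ ∈ ball (0:ℂ) 1 := hsub w₀ (hw₀d.trans hTR)
    have hder : HasDerivAt f (deriv f w₀) w₀ :=
      (hf.differentiableAt (isOpen_ball.mem_nhds hw₀b)).hasDerivAt
    have hstep := local_step hε (half_pos hε) hder (hsd w₀ hw₀b)
    have hIoc : Ioc (0:ℝ) (R - T) ∈ 𝓝[>] (0:ℝ) :=
      Ioc_mem_nhdsGT_of_mem ⟨le_refl 0, by linarith⟩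
    obtain ⟨δ, ⟨w₁, hw₁d, hw₁a⟩, hδ1, hδ2⟩ := (hstep.and hIoc).exists
    have hnew : T + δ ∈ S := by
      refine ⟨⟨by linarith, by linarith⟩, w₁, ?_, ?_⟩
      · calc dist w₁ z ≤ dist w₁ w₀ + dist w₀ z := dist_triangle _ _ _
          _ ≤ δ + T := add_le_add hw₁d hw₀d
          _ = T + δ := by ring
      · have : Real.arctan ‖f w₀‖ + (ε - ε/2) * δ ≤ Real.arctan ‖f w₁‖ := hw₁a
        have hcc : c = ε - ε/2 := by rw [hc_def]; ring
        calc Real.arctan ‖f z‖ + c * (T + δ)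
            = (Real.arctan ‖f z‖ + c * T) + c * δ := by ring
          _ ≤ Real.arctan ‖f w₀‖ + c * δ := by linarith
          _ ≤ Real.arctan ‖f w₁‖ := by rw [hcc]; linarith
    have := le_csSup hbdd hnew
    linarith
  obtain ⟨_, w₀, _, hw₀a⟩ := hTS
  have := Real.arctan_lt_pi_div_two ‖f w₀‖
  rw [hTeq] at hw₀a
  have : Real.arctan ‖f z‖ + c * R < Real.pi / 2 := lt_of_le_of_lt hw₀a this
  rw [hc_def] at this
  linarith

private lemma norm_bound {f : ℂ → ℂ} {ε : ℝ} (hε : 0 < ε)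
    (hf : DifferentiableOn ℂ f (ball (0:ℂ) 1))
    (hsd : ∀ z ∈ ball (0:ℂ) 1, ε * (1 + ‖f z‖ ^ 2) ≤ ‖deriv f z‖)
    {r : ℝ} (hr : r < 1) {z : ℂ} (hz : ‖z‖ ≤ r) :
    ‖f z‖ ≤ Real.tan (Real.pi / 2 - ε / 2 * ((1 - r) / 2)) := by
  have h := arctan_bound hε hf hsd hr hz
  have hr0 : 0 ≤ r := (norm_nonneg z).trans hz
  have h1 : Real.arctan ‖f z‖ ≤ Real.pi / 2 - ε / 2 * ((1 - r) / 2) := by linarith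
  have hmem1 := Real.arctan_mem_Ioo ‖f z‖
  have hposq : 0 < ε / 2 * ((1 - r) / 2) := mul_pos (half_pos hε) (by linarith)
  have hub : Real.pi / 2 - ε / 2 * ((1 - r) / 2) < Real.pi / 2 := by linarith
  have hlb : -(Real.pi / 2) < Real.pi / 2 - ε / 2 * ((1 - r) / 2) :=
    lt_of_lt_of_le hmem1.1 h1
  calc ‖f z‖ = Real.tan (Real.arctan ‖f z‖) := (Real.tan_arctan _).symm
    _ ≤ Real.tan (Real.pi / 2 - ε / 2 * ((1 - r) / 2)) :=
        Real.strictMonoOn_tan.monotoneOn hmem1 ⟨hlb, hub⟩ h1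

/-- exhausting radii -/
noncomputable def nfRad (k : ℕ) : ℝ := 1 - 1 / (k + 1)

private lemma nfRad_nonneg (k : ℕ) : 0 ≤ nfRad k := by
  have h1 : (1:ℝ) ≤ (k:ℝ) + 1 := by exact_mod_cast Nat.one_le_iff_ne_zero.2 (Nat.succ_ne_zero k)
  have : 1 / ((k:ℝ) + 1) ≤ 1 := by
    rw [div_le_one (by linarith)]; linarith
  simp only [nfRad]; linarith

private lemma nfRad_lt_one (k : ℕ) : nfRad k < 1 := by
  have : 0 < 1 / ((k:ℝ) + 1) := by positivity
  simp only [nfRad]; linarith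

/-- Mid radius -/
noncomputable def nfMid (k : ℕ) : ℝ := (1 + nfRad k) / 2

private lemma nfRad_le_mid (k : ℕ) : nfRad k ≤ nfMid k := by
  have := nfRad_lt_one k; simp only [nfMid]; linarith

private lemma nfMid_lt_one (k : ℕ) : nfMid k < 1 := by
  have := nfRad_lt_one k; simp only [nfMid]; linarith

/-- Uniform bound for family members of spherical derivative `≥ ε` on `‖z‖ ≤ nfMid k`. -/
noncomputable def nfBnd (ε : ℝ) (k : ℕ) : ℝ :=
  Real.tan (Real.pi / 2 - ε / 2 * ((1 - nfMid k) / 2))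

/-- The ambient space of restrictions. -/
private lemma nfRk_pos (k : ℕ) : 0 < (1 - nfRad k) / 2 := by
  have := nfRad_lt_one k; linarith

/-- The candidate compact sets. -/
def nfA (ε : ℝ) (k : ℕ) : Set (↥(closedBall (0:ℂ) (nfRad k)) →ᵇ ℂ) :=
  {h | (∀ p, ‖h p‖ ≤ nfBnd ε k) ∧
    ∀ p q : ↥(closedBall (0:ℂ) (nfRad k)), dist (p:ℂ) (q:ℂ) < (1 - nfRad k) / 2 →
      dist (h p) (h q) ≤ (2 * nfBnd ε k + 1) / ((1 - nfRad k) / 2) * dist (p:ℂ) (q:ℂ)}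

private lemma nfA_equicontinuous (ε : ℝ) (k : ℕ) :
    Equicontinuous ((↑) : nfA ε k → ↥(closedBall (0:ℂ) (nfRad k)) → ℂ) := by
  intro x₀
  rw [Metric.equicontinuousAt_iff]
  intro ε'' hε''
  set M : ℝ := max ((2 * nfBnd ε k + 1) / ((1 - nfRad k) / 2)) 0 with hM_def
  have hM0 : 0 ≤ M := le_max_right _ _
  have hRk := nfRk_pos k
  refine ⟨min ((1 - nfRad k) / 2) (ε'' / (M + 1)), lt_min hRk (by positivity), ?_⟩
  intro x hx i
  have hd1 : dist (x:ℂ) (x₀:ℂ) < (1 - nfRad k) / 2 := by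
    rw [← Subtype.dist_eq]; exact lt_of_lt_of_le hx (min_le_left _ _)
  have hd2 : dist (x:ℂ) (x₀:ℂ) ≤ ε'' / (M + 1) := by
    rw [← Subtype.dist_eq]; exact le_of_lt (lt_of_lt_of_le hx (min_le_right _ _))
  have hlip := i.2.2 x x₀ hd1
  calc dist ((i : ↥(closedBall (0:ℂ) (nfRad k)) →ᵇ ℂ) x₀) ((i : _ →ᵇ ℂ) x)
      = dist ((i : _ →ᵇ ℂ) x) ((i : _ →ᵇ ℂ) x₀) := dist_comm _ _
    _ ≤ (2 * nfBnd ε k + 1) / ((1 - nfRad k) / 2) * dist (x:ℂ) (x₀:ℂ) := hlip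
    _ ≤ M * dist (x:ℂ) (x₀:ℂ) := by
        apply mul_le_mul_of_nonneg_right (le_max_left _ _) dist_nonneg
    _ ≤ M * (ε'' / (M + 1)) := mul_le_mul_of_nonneg_left hd2 hM0
    _ = ε'' * (M / (M + 1)) := by ring
    _ < ε'' * 1 := by
        gcongr
        rw [div_lt_one (by positivity)]; linarith
    _ = ε'' := mul_one _

private lemma nfA_isCompact_closure (ε : ℝ) (k : ℕ) : IsCompact (closure (nfA ε k)) := by
  haveI : CompactSpace ↥(closedBall (0:ℂ) (nfRad k)) :=
    isCompact_iff_compactSpace.1 (isCompact_closedBall _ _)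
  apply BoundedContinuousFunction.arzela_ascoli (closedBall (0:ℂ) (nfBnd ε k))
    (isCompact_closedBall _ _)
  · intro h p hh
    rw [mem_closedBall_zero_iff]
    exact hh.1 p
  · exact nfA_equicontinuous ε k


set_option synthInstance.maxHeartbeats 1000000
set_option maxHeartbeats 2000000

/-- The family of all functions holomorphic on the unit disk
whose spherical derivative is at least `ε` everywhere is normal. -/
theorem normal_of_sphDeriv_ge_analytic (ε : ℝ) (hε : 0 < ε) :
    SphNormalOn {f : ℂ → ℂ | DifferentiableOn ℂ f (ball (0 : ℂ) 1) ∧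
      ∀ z ∈ ball (0 : ℂ) 1, ε ≤ sphDeriv f z} (ball (0 : ℂ) 1) := by
  intro F hF
  have hdiff : ∀ n, DifferentiableOn ℂ (F n) (ball (0:ℂ) 1) := fun n => (hF n).1
  have hsd : ∀ n, ∀ z ∈ ball (0:ℂ) 1, ε * (1 + ‖F n z‖ ^ 2) ≤ ‖deriv (F n) z‖ := by
    intro n z hz
    have hA : AnalyticAt ℂ (F n) z := (hdiff n).analyticAt (isOpen_ball.mem_nhds hz)
    have h2 := (hF n).2 z hz
    rw [sphDeriv, if_pos hA] at h2
    exact (le_div_iff₀ (by positivity)).1 h2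
  have hBnd : ∀ n k (w : ℂ), ‖w‖ ≤ nfMid k → ‖F n w‖ ≤ nfBnd ε k := fun n k w hw =>
    norm_bound hε (hdiff n) (hsd n) (nfMid_lt_one k) hw
  have hcontr : ∀ n k, Continuous (fun p : ↥(closedBall (0:ℂ) (nfRad k)) => F n (p:ℂ)) := by
    intro n k
    have hsub : closedBall (0:ℂ) (nfRad k) ⊆ ball (0:ℂ) 1 := by
      intro y hy
      rw [mem_closedBall, dist_zero_right] at hy
      rw [mem_ball, dist_zero_right]
      exact lt_of_le_of_lt hy (nfRad_lt_one k)
    exact ((hdiff n).continuousOn.mono hsub).restrict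
  set Y : ℕ → (∀ k : ℕ, ↥(closedBall (0:ℂ) (nfRad k)) →ᵇ ℂ) := fun n k =>
    BoundedContinuousFunction.ofNormedAddCommGroup _ (hcontr n k) (nfBnd ε k)
      (fun p => hBnd n k p ((mem_closedBall_zero_iff.1 p.2).trans (nfRad_le_mid k)))
    with hY_def
  have hmemA : ∀ n k, Y n k ∈ nfA ε k := by
    intro n k
    constructor
    · intro p
      exact hBnd n k p ((mem_closedBall_zero_iff.1 p.2).trans (nfRad_le_mid k))
    · intro p q hpq
      have hRk := nfRk_pos k
      have h2q : ‖(q:ℂ)‖ ≤ nfRad k := mem_closedBall_zero_iff.1 q.2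
      have hball : ball (q:ℂ) ((1 - nfRad k)/2) ⊆ ball (0:ℂ) 1 := by
        intro y hy
        rw [mem_ball] at hy
        rw [mem_ball, dist_zero_right]
        have h3 : ‖y‖ ≤ dist y (q:ℂ) + ‖(q:ℂ)‖ := by
          rw [dist_eq_norm]; simpa using norm_add_le (y - (q:ℂ)) (q:ℂ)
        have := nfRad_lt_one k
        linarith
      have hmaps : MapsTo (F n) (ball (q:ℂ) ((1 - nfRad k)/2))
          (ball (F n (q:ℂ)) (2 * nfBnd ε k + 1)) := by
        intro y hy
        rw [mem_ball] at hy ⊢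
        have h3 : ‖y‖ ≤ dist y (q:ℂ) + ‖(q:ℂ)‖ := by
          rw [dist_eq_norm]; simpa using norm_add_le (y - (q:ℂ)) (q:ℂ)
        have hyn : ‖y‖ ≤ nfMid k := by simp only [nfMid]; linarith
        have hb1 := hBnd n k y hyn
        have hb2 := hBnd n k (q:ℂ) (h2q.trans (nfRad_le_mid k))
        rw [dist_eq_norm]
        exact lt_of_le_of_lt (norm_sub_le _ _) (by linarith)
      exact Complex.dist_le_div_mul_dist_of_mapsTo_ball ((hdiff n).mono hball) (hmaps.mono_right ball_subset_closedBall)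
        (mem_ball.2 hpq)
  set K : Set (∀ k : ℕ, ↥(closedBall (0:ℂ) (nfRad k)) →ᵇ ℂ) :=
    Set.pi univ (fun k => closure (nfA ε k)) with hK_def
  have hKcomp : IsCompact K := isCompact_univ_pi (fun k => nfA_isCompact_closure ε k)
  have hmemK : ∀ n, Y n ∈ K := by
    intro n
    rw [hK_def, mem_univ_pi]
    exact fun k => subset_closure (hmemA n k)
  obtain ⟨L, hLK, φ, hφ, hconv⟩ := hKcomp.tendsto_subseq hmemK
  have hcomp : ∀ k, Tendsto (fun j => Y (φ j) k) atTop (𝓝 (L k)) := by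
    rw [tendsto_pi_nhds] at hconv
    exact hconv
  set g : ℂ → OnePoint ℂ :=
    fun w => ((limUnder atTop (fun n => F (φ n) w) : ℂ) : OnePoint ℂ) with hg_def
  refine ⟨φ, hφ, g, ?_⟩
  intro ε' hε' z hz
  rw [mem_ball, dist_zero_right] at hz
  obtain ⟨k, hk⟩ := exists_nat_one_div_lt (show (0:ℝ) < 1 - ‖z‖ by linarith)
  have hzk : ‖z‖ < nfRad k := by simp only [nfRad]; linarith
  refine ⟨ball (0:ℂ) (nfRad k), mem_nhdsWithin_of_mem_nhds
    (isOpen_ball.mem_nhds (by rwa [mem_ball, dist_zero_right])), ?_⟩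
  have hev : ∀ᶠ j in atTop, dist (Y (φ j) k) (L k) < ε' :=
    (Metric.tendsto_nhds.1 (hcomp k)) ε' hε'
  have hgval : ∀ w (hw : w ∈ closedBall (0:ℂ) (nfRad k)),
      g w = ((L k ⟨w, hw⟩ : ℂ) : OnePoint ℂ) := by
    intro w hw
    have hptw : Tendsto (fun j => F (φ j) w) atTop (𝓝 (L k ⟨w, hw⟩)) := by
      have hcont := (BoundedContinuousFunction.lipschitz_eval_const
        (x := (⟨w, hw⟩ : ↥(closedBall (0:ℂ) (nfRad k)))) (β := ℂ)).continuous.tendsto (L k)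
      exact hcont.comp (hcomp k)
    rw [hg_def]
    exact congrArg _ (hptw.limUnder_eq)
  filter_upwards [hev] with j hj w hw
  have hwn : ‖w‖ < nfRad k := by rwa [mem_ball, dist_zero_right] at hw
  have hwc : w ∈ closedBall (0:ℂ) (nfRad k) := by
    rw [mem_closedBall, dist_zero_right]; exact hwn.le
  have hwb : w ∈ ball (0:ℂ) 1 := by
    rw [mem_ball, dist_zero_right]; exact hwn.trans (nfRad_lt_one k)
  have hA : AnalyticAt ℂ (F (φ j)) w := (hdiff (φ j)).analyticAt (isOpen_ball.mem_nhds hwb)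
  have e1 : spherify (F (φ j)) w = ((F (φ j) w : ℂ) : OnePoint ℂ) := by
    rw [spherify, if_pos hA]
  rw [e1, hgval w hwc]
  have e3 : chordalDist ((F (φ j) w : ℂ) : OnePoint ℂ) ((L k ⟨w, hwc⟩ : ℂ) : OnePoint ℂ)
      = ‖F (φ j) w - L k ⟨w, hwc⟩‖ /
        (Real.sqrt (1 + ‖F (φ j) w‖ ^ 2) * Real.sqrt (1 + ‖L k ⟨w, hwc⟩‖ ^ 2)) := rfl
  rw [e3]
  have hs1 : 1 ≤ Real.sqrt (1 + ‖F (φ j) w‖ ^ 2) :=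
    Real.one_le_sqrt.2 (le_add_of_nonneg_right (by positivity))
  have hs2 : 1 ≤ Real.sqrt (1 + ‖L k ⟨w, hwc⟩‖ ^ 2) :=
    Real.one_le_sqrt.2 (le_add_of_nonneg_right (by positivity))
  have hprod : 1 ≤ Real.sqrt (1 + ‖F (φ j) w‖ ^ 2) * Real.sqrt (1 + ‖L k ⟨w, hwc⟩‖ ^ 2) := by
    nlinarith
  have hle : ‖F (φ j) w - L k ⟨w, hwc⟩‖ ≤ dist (Y (φ j) k) (L k) := by
    rw [← dist_eq_norm]
    exact BoundedContinuousFunction.dist_coe_le_dist (f := Y (φ j) k) (g := L k) ⟨w, hwc⟩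
  calc ‖F (φ j) w - L k ⟨w, hwc⟩‖ /
        (Real.sqrt (1 + ‖F (φ j) w‖ ^ 2) * Real.sqrt (1 + ‖L k ⟨w, hwc⟩‖ ^ 2))
      ≤ ‖F (φ j) w - L k ⟨w, hwc⟩‖ := div_le_self (norm_nonneg _) hprod
    _ ≤ dist (Y (φ j) k) (L k) := hle
    _ < ε' := hj
end

section
/- Let g be meromorphic on the open unit disk 𝔻 with g(0) = 0 and with spherical derivative g^# nowhere vanishing on 𝔻. Then for every r ∈ (0,1) there exists a point z₀ with |z₀| = r such that g^#(z₀) ≤ 1/(2r). -/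
open Complex Metric Set Filter Topology
open scoped Classical

lemma analyticAt_deriv'_s10 {f : ℂ → ℂ} {z : ℂ} (hf : AnalyticAt ℂ f z) :
    AnalyticAt ℂ (deriv f) z := by
  obtain ⟨s, hs, h⟩ := hf.exists_mem_nhds_analyticOnNhd
  obtain ⟨t, hts, hto, hzt⟩ := _root_.mem_nhds_iff.1 hs
  exact ((h.mono hts).deriv) z hzt

lemma not_analyticAt_inv {f : ℂ → ℂ} {z : ℂ} (hf : AnalyticAt ℂ f z) (h0 : f z = 0)
    (hfreq : ∃ᶠ w in 𝓝[≠] z, f w ≠ 0) : ¬ AnalyticAt ℂ (fun w => (f w)⁻¹) z := by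
  intro h
  have hc : Tendsto (fun w => ‖(f w)⁻¹‖) (𝓝 z) (𝓝 0) := by
    have := h.continuousAt.norm
    rwa [ContinuousAt, h0, inv_zero, norm_zero] at this
  have hcf : Tendsto (fun w => ‖f w‖) (𝓝 z) (𝓝 0) := by
    have := hf.continuousAt.norm; rwa [ContinuousAt, h0, norm_zero] at this
  have h1 : ∀ᶠ w in 𝓝[≠] z, ‖f w‖ < 1/2 :=
    (hcf.eventually_lt_const (by norm_num)).filter_mono nhdsWithin_le_nhds
  have h2 : ∀ᶠ w in 𝓝[≠] z, ‖(f w)⁻¹‖ < 1/2 :=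
    (hc.eventually_lt_const (by norm_num)).filter_mono nhdsWithin_le_nhds
  obtain ⟨w, hw, hw1, hw2⟩ := (hfreq.and_eventually (h1.and h2)).exists
  have : (1:ℝ) = ‖f w‖ * ‖(f w)⁻¹‖ := by
    rw [norm_inv, mul_inv_cancel₀ (norm_ne_zero_iff.2 hw)]
  nlinarith [norm_nonneg (f w), norm_nonneg ((f w)⁻¹)]

lemma sphDeriv_analytic {f : ℂ → ℂ} {z : ℂ} (h : AnalyticAt ℂ f z) :
    sphDeriv f z = ‖deriv f z‖ / (1 + ‖f z‖ ^ 2) := if_pos h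

lemma sphDeriv_pole {f : ℂ → ℂ} {z : ℂ} (h : ¬ AnalyticAt ℂ f z) :
    sphDeriv f z = ‖deriv (fun w => (f w)⁻¹) z‖ / (1 + ‖(f z)⁻¹‖ ^ 2) := if_neg h

/-- the spherical derivative of the (pointwise) reciprocal agrees. -/
lemma sphDeriv_inv_eq {g : ℂ → ℂ} {z : ℂ} (hz : z ∈ ball (0:ℂ) 1)
    (hg : ∀ z ∈ ball (0:ℂ) 1, ¬ AnalyticAt ℂ g z →
      g z = 0 ∧ AnalyticAt ℂ (fun w => (g w)⁻¹) z)
    (hnv : sphDeriv g z ≠ 0) :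
    sphDeriv (fun w => (g w)⁻¹) z = sphDeriv g z := by
  set u : ℂ → ℂ := fun w => (g w)⁻¹ with hu_def
  have hui : (fun w => (u w)⁻¹) = g := by
    funext w; simp [hu_def, inv_inv]
  by_cases hgz : AnalyticAt ℂ g z
  · by_cases hne : g z = 0
    · -- g has a zero at z; u is not analytic there
      have hfreq : ∃ᶠ w in 𝓝[≠] z, g w ≠ 0 := by
        rcases hgz.eventually_eq_zero_or_eventually_ne_zero with h | h
        · exfalso
          apply hnv
          have hd : deriv g z = 0 := by
            have : deriv g z = deriv (fun _ => (0:ℂ)) z :=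
              Filter.EventuallyEq.deriv_eq h
            simpa using this
          rw [sphDeriv_analytic hgz, hd, norm_zero, zero_div]
        · exact h.frequently
      have hnu : ¬ AnalyticAt ℂ u z := not_analyticAt_inv hgz hne hfreq
      rw [sphDeriv_pole hnu, sphDeriv_analytic hgz, hui]
      simp [hu_def, hne]
    · have hu : AnalyticAt ℂ u z := hgz.inv hne
      rw [sphDeriv_analytic hu, sphDeriv_analytic hgz]
      have hder : deriv u z = -deriv g z / g z ^ 2 :=
        deriv_inv'' hgz.differentiableAt hne
      rw [hder]
      have ha : (0:ℝ) < ‖g z‖ := norm_pos_iff.2 hne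
      have : ‖-deriv g z / g z ^ 2‖ = ‖deriv g z‖ / ‖g z‖ ^ 2 := by
        rw [norm_div, norm_neg, norm_pow]
      rw [this]
      have : ‖u z‖ = ‖g z‖⁻¹ := by rw [hu_def]; exact norm_inv _
      rw [this]
      have harith : ∀ a b : ℝ, 0 < a → b / a ^ 2 / (1 + (a⁻¹) ^ 2) = b / (1 + a ^ 2) := by
        intro a b hapos
        rw [div_div]
        congr 1
        field_simp
        ring
      exact harith _ _ ha
  · obtain ⟨hg0, hu⟩ := hg z hz hgz
    rw [sphDeriv_analytic hu, sphDeriv_pole hgz]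

lemma analyticAt_dslope_zero {f : ℂ → ℂ} (ha0 : AnalyticAt ℂ f 0) :
    AnalyticAt ℂ (dslope f 0) 0 := by
  apply Complex.analyticAt_of_differentiable_on_punctured_nhds_of_continuousAt
  · filter_upwards [ha0.eventually_analyticAt.filter_mono nhdsWithin_le_nhds,
      self_mem_nhdsWithin] with w hw (hw0 : w ≠ 0)
    exact (differentiableAt_dslope_of_ne hw0).2 hw.differentiableAt
  · exact continuousAt_dslope_same.2 ha0.differentiableAt

lemma analyticAt_dslope_ne {f : ℂ → ℂ} {z : ℂ} (hz : z ≠ 0) (hf : AnalyticAt ℂ f z)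
    (f0 : f 0 = 0) : AnalyticAt ℂ (dslope f 0) z := by
  have h1 : AnalyticAt ℂ (fun w => f w / w) z := hf.div analyticAt_id hz
  apply h1.congr
  filter_upwards [eventually_ne_nhds hz] with w hw
  rw [dslope_of_ne _ hw, slope_def_field, f0, sub_zero, sub_zero]


lemma key_lemma {f : ℂ → ℂ} {r : ℝ}
    (nice : ∀ z ∈ ball (0:ℂ) 1, ¬ AnalyticAt ℂ f z →
      f z = 0 ∧ AnalyticAt ℂ (fun w => (f w)⁻¹) z)
    (hnv : ∀ z ∈ ball (0:ℂ) 1, sphDeriv f z ≠ 0)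
    (ha0 : AnalyticAt ℂ f 0) (f0 : f 0 = 0)
    (hr : r ∈ Set.Ioo (0:ℝ) 1)
    (hb : ∀ z : ℂ, ‖z‖ = r → 1 / (2*r) < sphDeriv f z) : False := by
  obtain ⟨hr0, hr1⟩ := hr
  -- nonvanishing of derivatives
  have hderiv : ∀ z ∈ ball (0:ℂ) 1, AnalyticAt ℂ f z → deriv f z ≠ 0 := by
    intro z hz hfz hder
    exact hnv z hz (by rw [sphDeriv_analytic hfz, hder, norm_zero, zero_div])
  have hderiv' : ∀ z ∈ ball (0:ℂ) 1, ¬ AnalyticAt ℂ f z →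
      deriv (fun w => (f w)⁻¹) z ≠ 0 := by
    intro z hz hfz hder
    exact hnv z hz (by rw [sphDeriv_pole hfz, hder, norm_zero, zero_div])
  have h0mem : (0:ℂ) ∈ ball (0:ℂ) 1 := by simp
  have hd0 : deriv f 0 ≠ 0 := hderiv 0 h0mem ha0
  set H : ℂ → ℂ := fun z => dslope f 0 z / deriv f z with hH_def
  -- analyticity of H at analytic points of f
  have hHa : ∀ w ∈ ball (0:ℂ) 1, AnalyticAt ℂ f w → AnalyticAt ℂ H w := by
    intro w hw hfw
    have hdf := analyticAt_deriv'_s10 hfw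
    have hne := hderiv w hw hfw
    rcases eq_or_ne w 0 with rfl | hw0
    · exact (analyticAt_dslope_zero hfw).div hdf hne
    · exact (analyticAt_dslope_ne hw0 hfw f0).div hdf hne
  -- analyticity of H at poles of f
  have hH : ∀ z ∈ ball (0:ℂ) 1, AnalyticAt ℂ H z := by
    intro z hz
    by_cases hfz : AnalyticAt ℂ f z
    · exact hHa z hz hfz
    · set u : ℂ → ℂ := fun w => (f w)⁻¹ with hu_def
      obtain ⟨hfz0, hu⟩ := nice z hz hfz
      have hz0 : z ≠ 0 := fun h => hfz (h ▸ ha0)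
      have huz : u z = 0 := by rw [hu_def]; simp [hfz0]
      have hdu : deriv u z ≠ 0 := hderiv' z hz hfz
      have hfu : f = fun w => (u w)⁻¹ := by funext w; simp [hu_def]
      -- u is not locally zero
      have hune : ∀ᶠ w in 𝓝[≠] z, u w ≠ 0 := by
        rcases hu.eventually_eq_zero_or_eventually_ne_zero with h | h
        · exfalso
          apply hdu
          have : deriv u z = deriv (fun _ => (0:ℂ)) z := Filter.EventuallyEq.deriv_eq h
          simpa using this
        · exact h
      -- good points near z
      have hgood : ∀ᶠ w in 𝓝[≠] z, u w ≠ 0 ∧ AnalyticAt ℂ u w ∧ w ≠ 0 ∧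
          w ∈ ball (0:ℂ) 1 := by
        filter_upwards [hune,
          hu.eventually_analyticAt.filter_mono nhdsWithin_le_nhds,
          (eventually_ne_nhds hz0).filter_mono nhdsWithin_le_nhds,
          ((isOpen_ball.eventually_mem hz).filter_mono nhdsWithin_le_nhds)] with
          w h1 h2 h3 h4
        exact ⟨h1, h2, h3, h4⟩
      have hfan : ∀ w, u w ≠ 0 → AnalyticAt ℂ u w → AnalyticAt ℂ f w := by
        intro w h1 h2
        rw [hfu]
        exact h2.inv h1
      apply Complex.analyticAt_of_differentiable_on_punctured_nhds_of_continuousAt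
      · filter_upwards [hgood] with w ⟨h1, h2, h3, h4⟩
        exact (hHa w h4 (hfan w h1 h2)).differentiableAt
      · -- continuity at z via the formula G
        set G : ℂ → ℂ := fun w => -u w / (w * deriv u w) with hG_def
        have hGc : ContinuousAt G z := by
          apply ContinuousAt.div
          · exact hu.continuousAt.neg
          · exact continuousAt_id.mul (analyticAt_deriv'_s10 hu).continuousAt
          · simp [mul_ne_zero hz0 hdu]
        have hGz : G z = 0 := by rw [hG_def]; simp [huz]
        have hHz : H z = 0 := by
          rw [hH_def]
          simp only
          rw [dslope_of_ne _ hz0, slope_def_field, f0, hfz0, sub_zero, sub_zero,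
            zero_div, zero_div]
        have heq : ∀ᶠ w in 𝓝[≠] z, H w = G w := by
          filter_upwards [hgood] with w ⟨h1, h2, h3, h4⟩
          have hfw : AnalyticAt ℂ f w := hfan w h1 h2
          have hdf : deriv f w = -deriv u w / u w ^ 2 := by
            rw [hfu]
            exact deriv_inv'' h2.differentiableAt h1
          have hdfw : deriv f w ≠ 0 := hderiv w h4 hfw
          have hduw : deriv u w ≠ 0 := by
            intro h
            rw [h] at hdf
            simp at hdf
            exact hdfw hdf
          rw [hH_def, hG_def]
          simp only
          rw [dslope_of_ne _ h3, slope_def_field, f0, sub_zero, sub_zero, hdf]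
          have hfww : f w = (u w)⁻¹ := by rw [hfu]
          rw [hfww]
          field_simp
        have heq' : H =ᶠ[𝓝 z] G := by
          rw [Filter.EventuallyEq, ← nhdsNE_sup_pure z,
            eventually_sup]
          exact ⟨heq, by simp [hGz, hHz]⟩
        have : ContinuousAt H z := by
          apply hGc.congr
          exact heq'.symm
        exact this
  -- |H 0| = 1
  have hH0 : ‖H 0‖ = 1 := by
    rw [hH_def]
    simp only
    rw [dslope_same, div_self hd0, norm_one]
  -- |H z| < 1 on the circle of radius r
  have hHlt : ∀ z : ℂ, ‖z‖ = r → ‖H z‖ < 1 := by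
    intro z hzr
    have hz0 : z ≠ 0 := by
      intro h; rw [h, norm_zero] at hzr; exact hr0.ne hzr
    have hzball : z ∈ ball (0:ℂ) 1 := by
      rw [mem_ball, dist_zero_right, hzr]; exact hr1
    by_cases hfz : AnalyticAt ℂ f z
    · have hbz := hb z hzr
      rw [sphDeriv_analytic hfz] at hbz
      have hne := hderiv z hzball hfz
      have hfpos : (0:ℝ) < ‖deriv f z‖ := norm_pos_iff.2 hne
      have h1 : 1 + ‖f z‖ ^ 2 < 2 * r * ‖deriv f z‖ := by
        rw [div_lt_div_iff₀ (by linarith) (by positivity)] at hbz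
        linarith
      have h2 : ‖f z‖ < r * ‖deriv f z‖ := by nlinarith [sq_nonneg (‖f z‖ - 1)]
      have hHz : H z = f z / z / deriv f z := by
        rw [hH_def]; simp only
        rw [dslope_of_ne _ hz0, slope_def_field, f0, sub_zero, sub_zero]
      rw [hHz, norm_div, norm_div, hzr]
      rw [div_div]
      rw [div_lt_one (by positivity)]
      exact h2
    · obtain ⟨hfz0, hu⟩ := nice z hzball hfz
      have hHz : H z = 0 := by
        rw [hH_def]; simp only
        rw [dslope_of_ne _ hz0, slope_def_field, f0, hfz0, sub_zero, sub_zero,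
          zero_div, zero_div]
      rw [hHz, norm_zero]; exact one_pos
  -- maximum principle contradiction
  have hsub : ball (0:ℂ) r ⊆ ball (0:ℂ) 1 := ball_subset_ball hr1.le
  have hsub' : closedBall (0:ℂ) r ⊆ ball (0:ℂ) 1 := closedBall_subset_ball hr1
  have hdc : DiffContOnCl ℂ H (ball (0:ℂ) r) := by
    constructor
    · exact fun w hw => (hH w (hsub hw)).differentiableAt.differentiableWithinAt
    · rw [closure_ball (0:ℂ) hr0.ne']
      exact fun w hw => (hH w (hsub' hw)).continuousAt.continuousWithinAt
  have hsphere : ∀ w ∈ frontier (ball (0:ℂ) r), ‖w‖ = r := by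
    intro w hw
    rw [frontier_ball (0:ℂ) hr0.ne'] at hw
    rwa [mem_sphere, dist_zero_right] at hw
  -- maximum over the sphere
  obtain ⟨z₁, hz₁, hmax⟩ := (isCompact_sphere (0:ℂ) r).exists_isMaxOn
    ⟨(r:ℂ), by simp [abs_of_pos hr0]⟩
    (fun w hw => by
      have : w ∈ ball (0:ℂ) 1 := by
        rw [mem_sphere, dist_zero_right] at hw
        rw [mem_ball, dist_zero_right, hw]; exact hr1
      exact ((hH w this).continuousAt.norm).continuousWithinAt)
  have hz₁r : ‖z₁‖ = r := by rwa [mem_sphere, dist_zero_right] at hz₁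
  have hC : ‖H z₁‖ < 1 := hHlt z₁ hz₁r
  have h0cl : (0:ℂ) ∈ closure (ball (0:ℂ) r) := by
    rw [closure_ball (0:ℂ) hr0.ne']
    simp [hr0.le]
  have hfr : ∀ w ∈ frontier (ball (0:ℂ) r), ‖H w‖ ≤ ‖H z₁‖ := by
    intro w hw
    have hwr : ‖w‖ = r := hsphere w hw
    exact hmax (by rw [mem_sphere, dist_zero_right]; exact hwr)
  have hfin := Complex.norm_le_of_forall_mem_frontier_norm_le isBounded_ball hdc
    hfr h0cl
  rw [hH0] at hfin
  linarith

/-- If `g` is meromorphic on `𝔻` with `g(0) = 0` and nowhere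
vanishing spherical derivative, then on every circle `|z| = r` (`0 < r < 1`)
there is a point `z₀` with `g^#(z₀) ≤ 1/(2r)`. -/
theorem exists_sphDeriv_le_on_circle (g : ℂ → ℂ)
    (hg : MeromorphicNiceOn g (ball (0 : ℂ) 1)) (h0 : g 0 = 0)
    (hnv : ∀ z ∈ ball (0 : ℂ) 1, sphDeriv g z ≠ 0)
    (r : ℝ) (hr : r ∈ Set.Ioo (0 : ℝ) 1) :
    ∃ z₀ : ℂ, ‖z₀‖ = r ∧ sphDeriv g z₀ ≤ 1 / (2 * r) := by
  by_contra hcon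
  push_neg at hcon
  have hcon' : ∀ z : ℂ, ‖z‖ = r → 1 / (2 * r) < sphDeriv g z := fun z hz =>
    hcon z hz
  obtain ⟨hmero, hnice⟩ := hg
  have h0mem : (0:ℂ) ∈ ball (0:ℂ) 1 := by simp
  by_cases ha : AnalyticAt ℂ g 0
  · exact key_lemma hnice hnv ha h0 hr hcon'
  · set u : ℂ → ℂ := fun w => (g w)⁻¹ with hu_def
    obtain ⟨-, hu0⟩ := hnice 0 h0mem ha
    have hu00 : u 0 = 0 := by rw [hu_def]; simp [h0]
    have nice_u : ∀ z ∈ ball (0:ℂ) 1, ¬ AnalyticAt ℂ u z →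
        u z = 0 ∧ AnalyticAt ℂ (fun w => (u w)⁻¹) z := by
      intro z hz hnu
      have hga : AnalyticAt ℂ g z := by
        by_contra hng
        exact hnu (hnice z hz hng).2
      have hgz : g z = 0 := by
        by_contra hgz
        exact hnu (hga.inv hgz)
      have hui : (fun w => (u w)⁻¹) = g := funext fun w => inv_inv _
      rw [hui]
      exact ⟨by rw [hu_def]; simp [hgz], hga⟩
    have hsph : ∀ z ∈ ball (0:ℂ) 1, sphDeriv u z = sphDeriv g z := fun z hz =>
      sphDeriv_inv_eq hz hnice (hnv z hz)
    have hnv_u : ∀ z ∈ ball (0:ℂ) 1, sphDeriv u z ≠ 0 := fun z hz =>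
      (hsph z hz) ▸ hnv z hz
    have hb_u : ∀ z : ℂ, ‖z‖ = r → 1 / (2 * r) < sphDeriv u z := by
      intro z hzr
      have hzball : z ∈ ball (0:ℂ) 1 := by
        rw [mem_ball, dist_zero_right, hzr]; exact hr.2
      rw [hsph z hzball]
      exact hcon' z hzr
    exact key_lemma nice_u hnv_u hu0 hu00 hr hb_u
end

section
/- Let f be holomorphic on a neighbourhood of z₀ ∈ ℂ with f^#(z₀) ≠ 0. Then log f^# is twice differentiable near z₀ and its Laplacian satisfies Δ(log f^#)(z₀) = −4 · (f^#(z₀))²; in particular Δ(log f^#)(z₀) < 0, so f^# cannot attain a local minimum at z₀. -/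
open Complex Metric Set Filter Topology
open scoped Classical

/-- The Laplacian `∂²u/∂x² + ∂²u/∂y²` of a function `u : ℂ → ℝ`. -/
noncomputable def laplacian (u : ℂ → ℝ) (z : ℂ) : ℝ :=
  fderiv ℝ (fun w => fderiv ℝ u w 1) z 1 +
    fderiv ℝ (fun w => fderiv ℝ u w Complex.I) z Complex.I

section Aux

noncomputable def dCLM (b : ℝ) (a : ℂ) : ℂ →L[ℝ] ℝ :=
  b • (Complex.reCLM.comp (a • (1 : ℂ →L[ℝ] ℂ)))

@[simp] lemma dCLM_apply (b : ℝ) (a : ℂ) (v : ℂ) : dCLM b a v = b * (a * v).re := by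
  simp [dCLM, smul_eq_mul]

lemma norm_sq_eq_conj_mul_re (z : ℂ) : ‖z‖ ^ 2 = ((starRingEnd ℂ) z * z).re := by
  simp [Complex.sq_norm, Complex.normSq_apply, Complex.mul_re,
    Complex.conj_re, Complex.conj_im]

lemma norm_sq_eq_re_im (z : ℂ) : ‖z‖ ^ 2 = z.re ^ 2 + z.im ^ 2 := by
  simp [Complex.sq_norm, Complex.normSq_apply]; ring

lemma hasFDerivAt_normSq_comp {g : ℂ → ℂ} {z : ℂ} (hg : DifferentiableAt ℂ g z) :
    HasFDerivAt (fun w => ‖g w‖ ^ 2) (dCLM 2 ((starRingEnd ℂ) (g z) * deriv g z)) z := by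
  have hD : HasFDerivAt g ((deriv g z) • (1 : ℂ →L[ℝ] ℂ)) z :=
    hg.hasDerivAt.complexToReal_fderiv
  have hC : HasFDerivAt (fun w => (starRingEnd ℂ) (g w))
      ((Complex.conjCLE : ℂ →L[ℝ] ℂ).comp ((deriv g z) • (1 : ℂ →L[ℝ] ℂ))) z :=
    ((Complex.conjCLE : ℂ →L[ℝ] ℂ).hasFDerivAt).comp z hD
  have hP := hC.mul hD
  have hre := (Complex.reCLM.hasFDerivAt).comp z hP
  have hfun : (fun w => ‖g w‖ ^ 2) =
      fun w => Complex.reCLM ((fun w => (starRingEnd ℂ) (g w) * g w) w) :=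
    funext fun w => norm_sq_eq_conj_mul_re _
  rw [hfun]
  refine hre.congr_fderiv ?_
  ext v
  simp [dCLM, smul_eq_mul, Complex.mul_re, Complex.conj_re, Complex.conj_im]
  ring

noncomputable def phiAux (g : ℂ → ℂ) (c : ℝ) (v w : ℂ) : ℝ :=
  (c + ‖g w‖ ^ 2)⁻¹ * (2 * ((starRingEnd ℂ) (g w) * (deriv g w * v)).re)

lemma hasFDerivAt_logAux {g : ℂ → ℂ} {z : ℂ} (hg : DifferentiableAt ℂ g z) {c : ℝ}
    (hpos : 0 < c + ‖g z‖ ^ 2) :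
    HasFDerivAt (fun w => Real.log (c + ‖g w‖ ^ 2))
      (dCLM ((c + ‖g z‖ ^ 2)⁻¹ * 2) ((starRingEnd ℂ) (g z) * deriv g z)) z := by
  have h1 := (hasFDerivAt_normSq_comp hg).const_add c
  have h2 := (Real.hasDerivAt_log hpos.ne').comp_hasFDerivAt z h1
  refine h2.congr_fderiv ?_
  ext v
  simp [dCLM, smul_eq_mul]
  ring

lemma dCLM_apply_phiAux (g : ℂ → ℂ) (c : ℝ) (v w : ℂ) :
    dCLM ((c + ‖g w‖ ^ 2)⁻¹ * 2) ((starRingEnd ℂ) (g w) * deriv g w) v = phiAux g c v w := by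
  simp [phiAux, dCLM_apply, mul_assoc]

lemma hasFDerivAt_phiAux {g : ℂ → ℂ} {z : ℂ} (hg : DifferentiableAt ℂ g z)
    (hg' : DifferentiableAt ℂ (deriv g) z) {c : ℝ}
    (hpos : 0 < c + ‖g z‖ ^ 2) (v : ℂ) :
    ∃ L : ℂ →L[ℝ] ℝ, HasFDerivAt (phiAux g c v) L z ∧
      L v =
        -(((c + ‖g z‖ ^ 2) ^ 2)⁻¹ * (2 * ((starRingEnd ℂ) (g z) * (deriv g z * v)).re)) *
            (2 * ((starRingEnd ℂ) (g z) * (deriv g z * v)).re)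
        + (c + ‖g z‖ ^ 2)⁻¹ *
            (2 * ((starRingEnd ℂ) (deriv g z * v) * (deriv g z * v)
                 + (starRingEnd ℂ) (g z) * (deriv (deriv g) z * v * v)).re) := by
  have hA : (c + ‖g z‖ ^ 2) ≠ 0 := hpos.ne'
  have hp : HasFDerivAt (fun w => (c + ‖g w‖ ^ 2)⁻¹)
      ((-((c + ‖g z‖ ^ 2) ^ 2)⁻¹) • ((dCLM 2 ((starRingEnd ℂ) (g z) * deriv g z)))) z :=
    (hasDerivAt_inv hA).comp_hasFDerivAt z ((hasFDerivAt_normSq_comp hg).const_add c)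
  have hm : HasFDerivAt (fun w => deriv g w * v)
      ((deriv (deriv g) z * v) • (1 : ℂ →L[ℝ] ℂ)) z :=
    (hg'.hasDerivAt.mul_const v).complexToReal_fderiv
  have hDg : HasFDerivAt g ((deriv g z) • (1 : ℂ →L[ℝ] ℂ)) z :=
    hg.hasDerivAt.complexToReal_fderiv
  have hcg : HasFDerivAt (fun w => (starRingEnd ℂ) (g w))
      ((Complex.conjCLE : ℂ →L[ℝ] ℂ).comp ((deriv g z) • (1 : ℂ →L[ℝ] ℂ))) z :=
    ((Complex.conjCLE : ℂ →L[ℝ] ℂ).hasFDerivAt).comp z hDg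
  have hq0 := hcg.mul hm
  have hq1 := (Complex.reCLM.hasFDerivAt).comp z hq0
  have hq := hq1.const_mul (2:ℝ)
  have hφ := hp.mul hq
  refine ⟨_, hφ, ?_⟩
  simp [dCLM, smul_eq_mul, Complex.mul_re, Complex.conj_re, Complex.conj_im,
    Complex.add_re, Complex.mul_im, Complex.conj_im]
  ring

lemma contDiffAt_logAux {g : ℂ → ℂ} {z : ℂ} (hg : AnalyticAt ℂ g z) {c : ℝ}
    (hpos : 0 < c + ‖g z‖ ^ 2) :
    ContDiffAt ℝ 2 (fun w => Real.log (c + ‖g w‖ ^ 2)) z := by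
  have hg2 : ContDiffAt ℝ 2 g z := (hg.contDiffAt).restrict_scalars ℝ
  have hre : ContDiffAt ℝ 2 (fun x => (g x).re) z :=
    (Complex.reCLM.contDiff.contDiffAt).comp z hg2
  have him : ContDiffAt ℝ 2 (fun x => (g x).im) z :=
    (Complex.imCLM.contDiff.contDiffAt).comp z hg2
  have hinner : ContDiffAt ℝ 2 (fun x => c + ((g x).re ^ 2 + (g x).im ^ 2)) z :=
    contDiffAt_const.add ((hre.pow 2).add (him.pow 2))
  have hfun : (fun w => Real.log (c + ‖g w‖ ^ 2)) =
      fun x => Real.log (c + ((g x).re ^ 2 + (g x).im ^ 2)) := by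
    funext x; rw [norm_sq_eq_re_im]
  rw [hfun]
  have hne : c + ((g z).re ^ 2 + (g z).im ^ 2) ≠ 0 := by
    rw [← norm_sq_eq_re_im]; exact hpos.ne'
  exact (Real.contDiffAt_log.mpr hne).comp z hinner

lemma not_isLocalMin_of_secondDeriv_neg {ψ ψ' : ℝ → ℝ}
    (hψ : ∀ᶠ t in 𝓝 (0:ℝ), HasDerivAt ψ (ψ' t) t)
    {a : ℝ} (h2 : HasDerivAt ψ' a 0) (ha : a < 0) : ¬ IsLocalMin ψ 0 := by
  intro hmin
  have hψ0 : HasDerivAt ψ (ψ' 0) 0 := hψ.self_of_nhds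
  have h0 : ψ' 0 = 0 := by
    have h := hmin.deriv_eq_zero; rwa [hψ0.deriv] at h
  have hslope : Tendsto (slope ψ' 0) (𝓝[≠] (0:ℝ)) (𝓝 a) :=
    hasDerivAt_iff_tendsto_slope.mp h2
  have h1 : ∀ᶠ t in 𝓝[≠] (0:ℝ), slope ψ' 0 t < 0 :=
    hslope.eventually (Iio_mem_nhds ha)
  have h1' : ∀ᶠ t in 𝓝[>] (0:ℝ), slope ψ' 0 t < 0 :=
    h1.filter_mono (nhdsWithin_mono 0 (fun x hx => ne_of_gt hx))
  have hneg : ∀ᶠ t in 𝓝[>] (0:ℝ), ψ' t < 0 := by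
    filter_upwards [h1', self_mem_nhdsWithin] with t hs ht
    have ht : (0:ℝ) < t := ht
    have hd : ψ' t / t < 0 := by
      simpa [slope_def_field, h0] using hs
    have := mul_neg_of_neg_of_pos hd ht
    rwa [div_mul_cancel₀ _ (ne_of_gt ht)] at this
  obtain ⟨u, hu0, hu⟩ := mem_nhdsGT_iff_exists_Ioo_subset.mp hneg
  have hu0' : (0:ℝ) < u := hu0
  obtain ⟨ε, hε0, hε⟩ := Metric.eventually_nhds_iff.mp (hψ.and hmin)
  set δ := min u ε / 2 with hδdef
  have hδ0 : 0 < δ := by positivity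
  have hδu : δ < u := by
    have : min u ε ≤ u := min_le_left _ _
    simp only [hδdef]; linarith
  have hδε : δ < ε := by
    have : min u ε ≤ ε := min_le_right _ _
    simp only [hδdef]; linarith
  have hball : ∀ t ∈ Icc (0:ℝ) δ, dist t 0 < ε := by
    intro t ht
    rw [Real.dist_eq, sub_zero, _root_.abs_of_nonneg ht.1]
    exact lt_of_le_of_lt ht.2 hδε
  have hcont : ContinuousOn ψ (Icc 0 δ) := fun t ht =>
    ((hε (hball t ht)).1.differentiableAt.continuousAt).continuousWithinAt
  have hanti : StrictAntiOn ψ (Icc 0 δ) := by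
    apply strictAntiOn_of_deriv_neg (convex_Icc 0 δ) hcont
    intro t ht
    rw [interior_Icc] at ht
    have hdt : dist t 0 < ε := by
      rw [Real.dist_eq, sub_zero, _root_.abs_of_nonneg ht.1.le]
      exact ht.2.trans hδε
    rw [(hε hdt).1.deriv]
    exact hu ⟨ht.1, ht.2.trans hδu⟩
  have hlt : ψ δ < ψ 0 := hanti (left_mem_Icc.mpr hδ0.le) (right_mem_Icc.mpr hδ0.le) hδ0
  have hge : ψ 0 ≤ ψ δ :=
    (hε (by rw [Real.dist_eq, sub_zero, _root_.abs_of_nonneg hδ0.le]; exact hδε)).2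
  linarith

end Aux

/-- If `f` is holomorphic near `z₀` with `f^#(z₀) ≠ 0`, then
`log f^#` is twice (continuously) differentiable near `z₀`, its Laplacian at `z₀`
equals `-4 (f^#(z₀))² < 0`, and `f^#` has no local minimum at `z₀`. -/
theorem laplacian_log_sphDeriv (f : ℂ → ℂ) (z₀ : ℂ) (U : Set ℂ)
    (hU : IsOpen U) (hz₀ : z₀ ∈ U) (hf : DifferentiableOn ℂ f U)
    (hne : sphDeriv f z₀ ≠ 0) :
    (∀ᶠ z in 𝓝 z₀, ContDiffAt ℝ 2 (fun w => Real.log (sphDeriv f w)) z) ∧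
    laplacian (fun w => Real.log (sphDeriv f w)) z₀ = -4 * (sphDeriv f z₀) ^ 2 ∧
    laplacian (fun w => Real.log (sphDeriv f w)) z₀ < 0 ∧
    ¬ IsLocalMin (sphDeriv f) z₀ := by
  have honU : AnalyticOnNhd ℂ f U := hf.analyticOnNhd hU
  have hfa : ∀ w ∈ U, AnalyticAt ℂ f w := honU
  have hfz : AnalyticAt ℂ f z₀ := hfa z₀ hz₀
  have hd1a : ∀ w ∈ U, AnalyticAt ℂ (deriv f) w := honU.deriv
  have hd2a : ∀ w ∈ U, AnalyticAt ℂ (deriv (deriv f)) w := honU.deriv.deriv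
  have hUev : ∀ᶠ w in 𝓝 z₀, w ∈ U := hU.eventually_mem hz₀
  have hs : sphDeriv f z₀ = ‖deriv f z₀‖ / (1 + ‖f z₀‖ ^ 2) := by
    rw [sphDeriv, if_pos hfz]
  have hpos1 : ∀ w : ℂ, (0:ℝ) < 1 + ‖f w‖ ^ 2 := fun w => by positivity
  have hd1 : deriv f z₀ ≠ 0 := by
    intro h; apply hne; rw [hs, h]; simp
  have hspos : 0 < sphDeriv f z₀ := by
    rw [hs]
    exact div_pos (norm_pos_iff.mpr hd1) (hpos1 z₀)
  have E2 : ∀ᶠ w in 𝓝 z₀, deriv f w ≠ 0 :=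
    ((hd1a z₀ hz₀).continuousAt).eventually_ne hd1
  have hpos0 : ∀ w : ℂ, deriv f w ≠ 0 → (0:ℝ) < 0 + ‖deriv f w‖ ^ 2 := fun w h => by
    rw [zero_add]; exact pow_pos (norm_pos_iff.mpr h) 2
  -- the local expression of log ∘ sphDeriv
  have E4 : ∀ᶠ w in 𝓝 z₀, Real.log (sphDeriv f w) =
      (1/2 : ℝ) * Real.log (0 + ‖deriv f w‖ ^ 2) - Real.log (1 + ‖f w‖ ^ 2) := by
    filter_upwards [hUev, E2] with w hw h2
    have hsw : sphDeriv f w = ‖deriv f w‖ / (1 + ‖f w‖ ^ 2) := by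
      rw [sphDeriv, if_pos (hfa w hw)]
    rw [hsw, Real.log_div (norm_ne_zero_iff.mpr h2) (hpos1 w).ne', zero_add]
    rw [show Real.log (‖deriv f w‖ ^ 2) = 2 * Real.log ‖deriv f w‖ by
      rw [Real.log_pow]; norm_num]
    ring
  -- the eventual derivative of log ∘ sphDeriv
  set Dc : ℂ → (ℂ →L[ℝ] ℝ) := fun w =>
    (1/2 : ℝ) • dCLM ((0 + ‖deriv f w‖ ^ 2)⁻¹ * 2)
        ((starRingEnd ℂ) (deriv f w) * deriv (deriv f) w) -
      dCLM ((1 + ‖f w‖ ^ 2)⁻¹ * 2) ((starRingEnd ℂ) (f w) * deriv f w) with hDc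
  set Ψ : ℂ → ℂ → ℝ := fun v w =>
    (1/2 : ℝ) * phiAux (deriv f) 0 v w - phiAux f 1 v w with hΨ
  have hDcapp : ∀ w v, Dc w v = Ψ v w := by
    intro w v
    simp only [hDc, hΨ, ContinuousLinearMap.sub_apply, ContinuousLinearMap.smul_apply,
      smul_eq_mul, dCLM_apply_phiAux]
  have ED : ∀ᶠ w in 𝓝 z₀, HasFDerivAt (fun x => Real.log (sphDeriv f x)) (Dc w) w := by
    filter_upwards [hUev, E2, E4.eventually_nhds] with w hw h2 hE4
    have h₀ := hasFDerivAt_logAux (g := deriv f) ((hd1a w hw).differentiableAt)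
      (hpos0 w h2)
    have h₁ := hasFDerivAt_logAux (g := f) ((hfa w hw).differentiableAt) (hpos1 w)
    have combo := (h₀.const_mul (1/2 : ℝ)).sub h₁
    exact combo.congr_of_eventuallyEq hE4
  have EΨ : ∀ v : ℂ, (fun w => fderiv ℝ (fun x => Real.log (sphDeriv f x)) w v)
      =ᶠ[𝓝 z₀] fun w => Ψ v w := by
    intro v
    filter_upwards [ED] with w hw
    rw [hw.fderiv]
    exact hDcapp w v
  -- second derivative of Ψ v at z₀
  have HΨ : ∀ v : ℂ, ∃ M : ℂ →L[ℝ] ℝ, HasFDerivAt (fun w => Ψ v w) M z₀ ∧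
      M v = (1/2 : ℝ) *
        (-(((0 + ‖deriv f z₀‖ ^ 2) ^ 2)⁻¹ *
              (2 * ((starRingEnd ℂ) (deriv f z₀) * (deriv (deriv f) z₀ * v)).re)) *
            (2 * ((starRingEnd ℂ) (deriv f z₀) * (deriv (deriv f) z₀ * v)).re)
          + (0 + ‖deriv f z₀‖ ^ 2)⁻¹ *
            (2 * ((starRingEnd ℂ) (deriv (deriv f) z₀ * v) * (deriv (deriv f) z₀ * v)
                 + (starRingEnd ℂ) (deriv f z₀) * (deriv (deriv (deriv f)) z₀ * v * v)).re))
        - (-(((1 + ‖f z₀‖ ^ 2) ^ 2)⁻¹ *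
              (2 * ((starRingEnd ℂ) (f z₀) * (deriv f z₀ * v)).re)) *
            (2 * ((starRingEnd ℂ) (f z₀) * (deriv f z₀ * v)).re)
          + (1 + ‖f z₀‖ ^ 2)⁻¹ *
            (2 * ((starRingEnd ℂ) (deriv f z₀ * v) * (deriv f z₀ * v)
                 + (starRingEnd ℂ) (f z₀) * (deriv (deriv f) z₀ * v * v)).re)) := by
    intro v
    obtain ⟨L₀, hL₀, hL₀v⟩ := hasFDerivAt_phiAux (g := deriv f)
      ((hd1a z₀ hz₀).differentiableAt) ((hd2a z₀ hz₀).differentiableAt)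
      (hpos0 z₀ hd1) v
    obtain ⟨L₁, hL₁, hL₁v⟩ := hasFDerivAt_phiAux (g := f)
      (hfz.differentiableAt) ((hd1a z₀ hz₀).differentiableAt) (hpos1 z₀) v
    refine ⟨(1/2 : ℝ) • L₀ - L₁, (hL₀.const_mul (1/2 : ℝ)).sub hL₁, ?_⟩
    simp only [ContinuousLinearMap.sub_apply, ContinuousLinearMap.smul_apply, smul_eq_mul,
      hL₀v, hL₁v]
  obtain ⟨M₁, hM₁, hM₁v⟩ := HΨ 1
  obtain ⟨MI, hMI, hMIv⟩ := HΨ Complex.I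
  have hlap : laplacian (fun w => Real.log (sphDeriv f w)) z₀ = M₁ 1 + MI Complex.I := by
    rw [laplacian]
    rw [(EΨ 1).fderiv_eq, (EΨ Complex.I).fderiv_eq, hM₁.fderiv, hMI.fderiv]
  -- main algebraic identity
  have halg : M₁ 1 + MI Complex.I = -4 * (sphDeriv f z₀) ^ 2 := by
    rw [hM₁v, hMIv, hs]
    set F := f z₀
    set d1 := deriv f z₀
    set d2 := deriv (deriv f) z₀
    set d3 := deriv (deriv (deriv f)) z₀
    have hn1 : ‖d1‖ ^ 2 = d1.re ^ 2 + d1.im ^ 2 := norm_sq_eq_re_im d1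
    have hnF : ‖F‖ ^ 2 = F.re ^ 2 + F.im ^ 2 := norm_sq_eq_re_im F
    have hd1' : d1.re ^ 2 + d1.im ^ 2 ≠ 0 := by
      rw [← hn1]
      exact (pow_pos (norm_pos_iff.mpr hd1) 2).ne'
    have hF' : 1 + (F.re ^ 2 + F.im ^ 2) ≠ 0 := by positivity
    simp only [hn1, hnF, zero_add, div_pow, Complex.mul_re, Complex.mul_im,
      Complex.add_re, Complex.add_im, Complex.conj_re, Complex.conj_im,
      Complex.I_re, Complex.I_im, Complex.one_re, Complex.one_im]
    field_simp
    ring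
  refine ⟨?_, ?_, ?_, ?_⟩
  · -- smoothness
    filter_upwards [hUev, E2, E4.eventually_nhds] with w hw h2 hE4
    have c₀ := contDiffAt_logAux (hd1a w hw) (hpos0 w h2)
    have c₁ := contDiffAt_logAux (hfa w hw) (hpos1 w)
    exact ((contDiffAt_const (c := (1/2 : ℝ))).mul c₀).sub c₁ |>.congr_of_eventuallyEq hE4
  · rw [hlap]; exact halg
  · rw [hlap, halg]
    have : (0:ℝ) < (sphDeriv f z₀) ^ 2 := pow_pos hspos 2
    linarith
  · -- no local min
    intro hmin
    have hminlog : IsLocalMin (fun w => Real.log (sphDeriv f w)) z₀ := by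
      filter_upwards [hmin] with w hw
      exact Real.log_le_log hspos hw
    have hsum : M₁ 1 + MI Complex.I < 0 := by
      rw [halg]
      have : (0:ℝ) < (sphDeriv f z₀) ^ 2 := pow_pos hspos 2
      linarith
    have key : ∀ (e : ℂ) (M : ℂ →L[ℝ] ℝ), HasFDerivAt (fun w => Ψ e w) M z₀ →
        M e < 0 → False := by
      intro e M hM hMe
      set ℓ : ℝ → ℂ := fun t => z₀ + t • e with hℓ
      have hℓ0 : ℓ 0 = z₀ := by simp [hℓ]
      have hℓc : Continuous ℓ := continuous_const.add (continuous_id.smul continuous_const)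
      have hℓt : Tendsto ℓ (𝓝 0) (𝓝 z₀) := by
        rw [← hℓ0]; exact hℓc.tendsto 0
      have hℓd : ∀ t : ℝ, HasDerivAt ℓ e t := by
        intro t
        simpa [hℓ] using ((hasDerivAt_id t).smul_const e).const_add z₀
      have hψ : ∀ᶠ t in 𝓝 (0:ℝ),
          HasDerivAt (fun s => Real.log (sphDeriv f (ℓ s))) (Ψ e (ℓ t)) t := by
        filter_upwards [hℓt.eventually ED] with t ht
        have h := ht.comp_hasDerivAt t (hℓd t)
        rw [hDcapp] at h
        simpa [Function.comp_def] using h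
      have hψ' : HasDerivAt (fun t => Ψ e (ℓ t)) (M e) 0 := by
        have hMl : HasFDerivAt (fun w => Ψ e w) M (ℓ 0) := by rw [hℓ0]; exact hM
        have h := hMl.comp_hasDerivAt 0 (hℓd 0)
        simpa [Function.comp_def] using h
      have hminψ : IsLocalMin (fun t => Real.log (sphDeriv f (ℓ t))) 0 := by
        have := hℓt.eventually hminlog
        filter_upwards [this] with t ht
        simpa [hℓ0] using ht
      exact (not_isLocalMin_of_secondDeriv_neg hψ hψ' hMe) hminψ
    rcases lt_or_ge (M₁ 1) 0 with h | h
    · exact key 1 M₁ hM₁ h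
    · exact key Complex.I MI hMI (by linarith)
end

section
/- Let 0 < ρ < r, suppose (r+ρ)/(r−ρ) < 2, and let ε > 0. Let f be holomorphic on the open disk U_r(0) = {z : |z| < r} with |f'(z)| ≥ 1 and f^#(z) ≥ ε for all z ∈ U_r(0). Then max_{|z| ≤ ρ} |f(z)| ≤ ( (1/ε) · (1/ρ)^{(r+ρ)/(r−ρ)} )^{1/(2 − (r+ρ)/(r−ρ))}. -/
open Complex Metric Set Filter Topology
open scoped Classical

open intervalIntegral MeasureTheory in
lemma key_primitive {r : ℝ} (hr : 0 < r) {q : ℂ → ℂ}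
    (hq_diff : DifferentiableOn ℂ q (ball (0:ℂ) r))
    (hq_cont : ContinuousOn q (ball (0:ℂ) r))
    (hq'_cont : ContinuousOn (deriv q) (ball (0:ℂ) r)) :
    ∀ z ∈ ball (0:ℂ) r, HasDerivAt (fun z : ℂ => ∫ t in (0:ℝ)..1, z * q ((t:ℂ) * z)) (q z) z := by
  intro z hz
  rw [mem_ball_zero_iff] at hz
  set s : ℝ := (‖z‖ + r) / 2 with hs_def
  have hs0 : 0 < s := by positivity
  have hzs : ‖z‖ < s := by simp only [hs_def]; linarith
  have hsr : s < r := by simp only [hs_def]; linarith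
  set δ : ℝ := s - ‖z‖ with hδ_def
  have hδ : 0 < δ := by simp only [hδ_def]; linarith
  have hKsub : closedBall (0:ℂ) s ⊆ ball (0:ℂ) r := closedBall_subset_ball hsr
  have hmem : ∀ x ∈ ball z δ, ∀ t : ℝ, t ∈ Set.Icc (0:ℝ) 1 → (t:ℂ) * x ∈ closedBall (0:ℂ) s := by
    intro x hx t ht
    rw [mem_closedBall_zero_iff]
    have hxs : ‖x‖ < s := by
      have := mem_ball_iff_norm.mp hx
      calc ‖x‖ = ‖z + (x - z)‖ := by ring_nf
        _ ≤ ‖z‖ + ‖x - z‖ := norm_add_le _ _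
        _ < ‖z‖ + δ := by linarith
        _ = s := by simp [hδ_def]
    calc ‖(t:ℂ) * x‖ = |t| * ‖x‖ := by simp [norm_mul]
      _ ≤ 1 * ‖x‖ := by
          apply mul_le_mul_of_nonneg_right _ (norm_nonneg x)
          rw [abs_le]; exact ⟨by linarith [ht.1], ht.2⟩
      _ ≤ s := by linarith
  obtain ⟨C₁, hC₁⟩ := (isCompact_closedBall (0:ℂ) s).exists_bound_of_continuousOn
    (hq_cont.mono hKsub)
  obtain ⟨C₂, hC₂⟩ := (isCompact_closedBall (0:ℂ) s).exists_bound_of_continuousOn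
    (hq'_cont.mono hKsub)
  have hC₂0 : 0 ≤ C₂ := le_trans (norm_nonneg _) (hC₂ 0 (mem_closedBall_self hs0.le))
  -- differentiation under the integral sign
  set F : ℂ → ℝ → ℂ := fun x t => x * q ((t:ℂ) * x) with hF_def
  set F' : ℂ → ℝ → ℂ := fun x t => q ((t:ℂ) * x) + x * (deriv q ((t:ℂ) * x) * (t:ℂ)) with hF'_def
  have hIsub : Set.uIoc (0:ℝ) 1 ⊆ Set.Icc (0:ℝ) 1 := by
    rw [Set.uIoc_of_le (by norm_num : (0:ℝ) ≤ 1)]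
    exact Set.Ioc_subset_Icc_self
  have hcont_aux : ∀ x ∈ ball z δ, ContinuousOn (fun t : ℝ => ((t:ℂ) * x)) (Set.Icc 0 1) :=
    fun x _ => (Complex.continuous_ofReal.continuousOn).mul continuousOn_const
  have hFcont : ∀ x ∈ ball z δ, ContinuousOn (F x) (Set.Icc 0 1) := by
    intro x hx
    exact continuousOn_const.mul <| (hq_cont.mono hKsub).comp (hcont_aux x hx)
      (fun t ht => hmem x hx t ht)
  have hF'cont : ContinuousOn (F' z) (Set.Icc 0 1) := by
    have hzmem : z ∈ ball z δ := mem_ball_self hδ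
    refine ContinuousOn.add ?_ (continuousOn_const.mul (ContinuousOn.mul ?_ Complex.continuous_ofReal.continuousOn))
    · exact (hq_cont.mono hKsub).comp (hcont_aux z hzmem) (fun t ht => hmem z hzmem t ht)
    · exact (hq'_cont.mono hKsub).comp (hcont_aux z hzmem) (fun t ht => hmem z hzmem t ht)
  have hderiv := hasDerivAt_integral_of_dominated_loc_of_deriv_le (μ := volume)
      (F := F) (F' := F') (x₀ := z) (a := 0) (b := 1)
      (bound := fun _ => C₁ + s * C₂) (ball_mem_nhds z hδ)
      ?meas ?int ?meas' ?bnd ?bndint ?diff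
  case meas =>
    filter_upwards [ball_mem_nhds z hδ] with x hx
    exact ((hFcont x hx).mono hIsub).aestronglyMeasurable measurableSet_uIoc
  case int =>
    exact ContinuousOn.intervalIntegrable
      ((hFcont z (mem_ball_self hδ)).mono (Set.uIcc_of_le (by norm_num : (0:ℝ) ≤ 1)).le)
  case meas' =>
    exact (hF'cont.mono hIsub).aestronglyMeasurable measurableSet_uIoc
  case bnd =>
    refine Eventually.of_forall fun t ht x hx => ?_
    have ht' : t ∈ Set.Icc (0:ℝ) 1 := hIsub ht
    have h1 : ‖q ((t:ℂ) * x)‖ ≤ C₁ := hC₁ _ (hmem x hx t ht')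
    have h2 : ‖deriv q ((t:ℂ) * x)‖ ≤ C₂ := hC₂ _ (hmem x hx t ht')
    have hxs : ‖x‖ ≤ s := by
      have := mem_ball_iff_norm.mp hx
      have : ‖x‖ ≤ ‖z‖ + ‖x - z‖ := by
        calc ‖x‖ = ‖z + (x - z)‖ := by ring_nf
          _ ≤ ‖z‖ + ‖x - z‖ := norm_add_le _ _
      linarith [mem_ball_iff_norm.mp hx]
    calc ‖F' x t‖ ≤ ‖q ((t:ℂ) * x)‖ + ‖x * (deriv q ((t:ℂ) * x) * (t:ℂ))‖ := norm_add_le _ _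
      _ = ‖q ((t:ℂ) * x)‖ + ‖x‖ * (‖deriv q ((t:ℂ) * x)‖ * |t|) := by
          simp [norm_mul]
      _ ≤ C₁ + s * C₂ := by
          have h3 : |t| ≤ 1 := by rw [abs_le]; exact ⟨by linarith [ht'.1], ht'.2⟩
          have hin : ‖deriv q ((t:ℂ) * x)‖ * |t| ≤ C₂ := by
            calc ‖deriv q ((t:ℂ) * x)‖ * |t| ≤ C₂ * 1 :=
                  mul_le_mul h2 h3 (abs_nonneg t) hC₂0
              _ = C₂ := mul_one _
          have : ‖x‖ * (‖deriv q ((t:ℂ) * x)‖ * |t|) ≤ s * C₂ :=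
            mul_le_mul hxs hin (by positivity) hs0.le
          linarith
  case bndint => exact intervalIntegrable_const
  case diff =>
    refine Eventually.of_forall fun t ht x hx => ?_
    have ht' : t ∈ Set.Icc (0:ℝ) 1 := hIsub ht
    have hmem' : (t:ℂ) * x ∈ ball (0:ℂ) r := hKsub (hmem x hx t ht')
    have hq_at : HasDerivAt q (deriv q ((t:ℂ) * x)) ((t:ℂ) * x) :=
      (hq_diff.differentiableAt (isOpen_ball.mem_nhds hmem')).hasDerivAt
    have hinner : HasDerivAt (fun y : ℂ => (t:ℂ) * y) (t:ℂ) x := by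
      simpa using (hasDerivAt_id x).const_mul (t:ℂ)
    have hcomp : HasDerivAt (fun y : ℂ => q ((t:ℂ) * y)) (deriv q ((t:ℂ) * x) * (t:ℂ)) x :=
      hq_at.comp x hinner
    have := (hasDerivAt_id x).mul hcomp
    simp only [one_mul, id_eq] at this; exact this
  obtain ⟨hF'int, hderiv⟩ := hderiv
  -- compute the integral of F' z
  have hint_eq : (∫ t in (0:ℝ)..1, F' z t) = q z := by
    have hψ : ∀ t ∈ Set.uIcc (0:ℝ) 1, HasDerivAt (fun t : ℝ => (t:ℂ) * q ((t:ℂ) * z)) (F' z t) t := by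
      intro t ht
      rw [Set.uIcc_of_le (by norm_num : (0:ℝ) ≤ 1)] at ht
      have hmem' : (t:ℂ) * z ∈ ball (0:ℂ) r :=
        hKsub (hmem z (mem_ball_self hδ) t ht)
      have hq_at : HasDerivAt q (deriv q ((t:ℂ) * z)) ((t:ℂ) * z) :=
        (hq_diff.differentiableAt (isOpen_ball.mem_nhds hmem')).hasDerivAt
      have hinner : HasDerivAt (fun y : ℂ => y * z) z (t:ℂ) := by
        simpa using (hasDerivAt_id (t:ℂ)).mul_const z
      have hcomp : HasDerivAt (fun y : ℂ => q (y * z)) (deriv q ((t:ℂ) * z) * z) (t:ℂ) :=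
        hq_at.comp (t:ℂ) hinner
      have hcompR : HasDerivAt (fun t : ℝ => q ((t:ℂ) * z)) (deriv q ((t:ℂ) * z) * z) t :=
        hcomp.comp_ofReal
      have hidR : HasDerivAt (fun t : ℝ => (t:ℂ)) 1 t := Complex.ofRealCLM.hasDerivAt
      have := hidR.mul hcompR
      have heq : (1 : ℂ) * q ((t:ℂ) * z) + (t:ℂ) * (deriv q ((t:ℂ) * z) * z) = F' z t := by
        simp only [hF'_def]; ring
      rw [heq] at this; exact this
    have := intervalIntegral.integral_eq_sub_of_hasDerivAt hψ hF'int
    rw [this]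
    norm_num
  rw [hint_eq] at hderiv
  exact hderiv

/-- Existence of a holomorphic logarithm of a nonvanishing holomorphic function on a disc. -/
lemma exists_holo_log {r : ℝ} (hr : 0 < r) {u : ℂ → ℂ}
    (hu : DifferentiableOn ℂ u (ball (0:ℂ) r))
    (hne : ∀ z ∈ ball (0:ℂ) r, u z ≠ 0) :
    ∃ g : ℂ → ℂ, DifferentiableOn ℂ g (ball (0:ℂ) r) ∧
      g 0 = Complex.log (u 0) ∧ ∀ z ∈ ball (0:ℂ) r, Complex.exp (g z) = u z := by
  have hball : IsOpen (ball (0:ℂ) r) := isOpen_ball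
  have h0mem : (0:ℂ) ∈ ball (0:ℂ) r := by simpa using hr
  have hu_an : AnalyticOnNhd ℂ u (ball (0:ℂ) r) := hu.analyticOnNhd hball
  set q : ℂ → ℂ := fun w => deriv u w / u w with hq_def
  have hq_diff : DifferentiableOn ℂ q (ball (0:ℂ) r) :=
    (hu_an.deriv.differentiableOn).div hu hne
  have hq_an : AnalyticOnNhd ℂ q (ball (0:ℂ) r) := hq_diff.analyticOnNhd hball
  have key := key_primitive hr hq_diff hq_diff.continuousOn hq_an.deriv.continuousOn
  set h : ℂ → ℂ := fun z => ∫ t in (0:ℝ)..1, z * q ((t:ℂ) * z) with hh_def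
  set g : ℂ → ℂ := fun z => Complex.log (u 0) + h z with hg_def
  have hgd : ∀ z ∈ ball (0:ℂ) r, HasDerivAt g (q z) z := by
    intro z hz
    have := (hasDerivAt_const z (Complex.log (u 0))).add (key z hz)
    rw [zero_add] at this; exact this
  have hgdiff : DifferentiableOn ℂ g (ball (0:ℂ) r) :=
    fun z hz => ((hgd z hz).differentiableAt).differentiableWithinAt
  have hg0 : g 0 = Complex.log (u 0) := by
    simp [hg_def, hh_def]
  refine ⟨g, hgdiff, hg0, ?_⟩
  -- show exp ∘ g = u via constancy of u * exp (-g)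
  set E : ℂ → ℂ := fun w => u w * Complex.exp (-(g w)) with hE_def
  have hE : ∀ w ∈ ball (0:ℂ) r, HasDerivAt E 0 w := by
    intro w hw
    have hu' : HasDerivAt u (deriv u w) w :=
      (hu.differentiableAt (hball.mem_nhds hw)).hasDerivAt
    have hexp : HasDerivAt (fun w => Complex.exp (-(g w))) (Complex.exp (-(g w)) * (-(q w))) w :=
      (hgd w hw).neg.cexp
    have := hu'.mul hexp
    refine this.congr_deriv ?_
    have hq : q w = deriv u w / u w := rfl
    rw [hq]
    field_simp [hne w hw]
    ring
  have hEconst : ∀ w ∈ ball (0:ℂ) r, E w = E 0 := by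
    intro w hw
    refine (convex_ball (0:ℂ) r).is_const_of_fderivWithin_eq_zero
      (fun x hx => ((hE x hx).differentiableAt).differentiableWithinAt) ?_ hw h0mem
    intro x hx
    have hfd := ((hE x hx).hasFDerivAt.hasFDerivWithinAt).fderivWithin
      (hball.uniqueDiffWithinAt hx)
    rw [hfd]
    ext
    simp
  have hE0 : E 0 = 1 := by
    simp only [hE_def, hg0, Complex.exp_neg, Complex.exp_log (hne 0 h0mem)]
    field_simp [hne 0 h0mem]
  intro z hz
  have h1 : u z * Complex.exp (-(g z)) = 1 := (hEconst z hz).trans hE0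
  have h2 : Complex.exp (-(g z)) * Complex.exp (g z) = 1 := by
    rw [← Complex.exp_add]; simp
  calc Complex.exp (g z) = u z * Complex.exp (-(g z)) * Complex.exp (g z) := by rw [h1, one_mul]
    _ = u z * (Complex.exp (-(g z)) * Complex.exp (g z)) := by ring
    _ = u z := by rw [h2, mul_one]

/-- Multiplicative Harnack inequality for a holomorphic function with `‖u‖ ≥ 1` on a disc. -/
lemma harnack_bound {ρ r : ℝ} (hρ : 0 < ρ) (hρr : ρ < r) {u : ℂ → ℂ}
    (hu : DifferentiableOn ℂ u (ball (0:ℂ) r))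
    (h1 : ∀ z ∈ ball (0:ℂ) r, 1 ≤ ‖u z‖)
    {z₀ : ℂ} (hz₀ : z₀ ∈ closedBall (0:ℂ) ρ) :
    ‖u z₀‖ ≤ ‖u 0‖ ^ ((r + ρ) / (r - ρ)) := by
  have hr : 0 < r := hρ.trans hρr
  have h0mem : (0:ℂ) ∈ ball (0:ℂ) r := by simpa using hr
  have hz₀' : z₀ ∈ ball (0:ℂ) r := closedBall_subset_ball hρr hz₀
  have hne : ∀ z ∈ ball (0:ℂ) r, u z ≠ 0 := by
    intro z hz h0
    have := h1 z hz
    rw [h0] at this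
    norm_num at this
  by_cases hA : ∃ z₁ ∈ ball (0:ℂ) r, ‖u z₁‖ ≤ 1
  · -- maximum principle: ‖u‖ ≡ 1
    obtain ⟨z₁, hz₁, hu1⟩ := hA
    have hu1' : ‖u z₁‖ = 1 := le_antisymm hu1 (h1 z₁ hz₁)
    set G : ℂ → ℂ := fun z => (u z)⁻¹ with hG_def
    have hGdiff : DifferentiableOn ℂ G (ball (0:ℂ) r) := hu.inv hne
    have hmax : IsMaxOn (norm ∘ G) (ball (0:ℂ) r) z₁ := by
      intro z hz
      simp only [Function.comp_apply, hG_def, norm_inv, hu1', inv_one]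
      exact inv_le_one_of_one_le₀ (h1 z hz)
    have heq := Complex.eqOn_of_isPreconnected_of_isMaxOn_norm
      (convex_ball (0:ℂ) r).isPreconnected isOpen_ball hGdiff hz₁ hmax
    have hval : ∀ z ∈ ball (0:ℂ) r, ‖u z‖ = 1 := by
      intro z hz
      have := heq hz
      simp only [Function.const_apply, hG_def] at this
      have : ‖(u z)⁻¹‖ = ‖(u z₁)⁻¹‖ := by rw [this]
      rw [norm_inv, norm_inv, hu1', inv_one, inv_eq_one] at this
      exact this
    rw [hval z₀ hz₀', hval 0 h0mem, Real.one_rpow]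
  · push_neg at hA
    -- now ‖u z‖ > 1 on the ball
    obtain ⟨g, hgdiff, hg0, hgexp⟩ := exists_holo_log hr hu hne
    have hre : ∀ z ∈ ball (0:ℂ) r, (g z).re = Real.log ‖u z‖ := by
      intro z hz
      have : ‖u z‖ = Real.exp (g z).re := by
        rw [← hgexp z hz]; exact Complex.norm_exp _
      rw [this, Real.log_exp]
    set a : ℝ := Real.log ‖u 0‖ with ha_def
    have ha : 0 < a := Real.log_pos (hA 0 h0mem)
    set g₁ : ℂ → ℂ := fun z => g z - (g 0).im * Complex.I with hg₁_def
    have hg₁re : ∀ z, (g₁ z).re = (g z).re := by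
      intro z; simp [hg₁_def]
    have hg₁0 : g₁ 0 = (a : ℂ) := by
      apply Complex.ext
      · rw [hg₁re 0, hre 0 h0mem]; simp [ha_def]
      · simp [hg₁_def]
    have hpos : ∀ z ∈ ball (0:ℂ) r, 0 < (g₁ z).re := by
      intro z hz
      rw [hg₁re, hre z hz]
      exact Real.log_pos (hA z hz)
    have hden : ∀ z ∈ ball (0:ℂ) r, g₁ z + (a : ℂ) ≠ 0 := by
      intro z hz h0
      have : (g₁ z + (a:ℂ)).re = 0 := by rw [h0]; simp
      simp only [Complex.add_re, Complex.ofReal_re] at this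
      linarith [hpos z hz]
    set h : ℂ → ℂ := fun z => (g₁ z - (a:ℂ)) / (g₁ z + (a:ℂ)) with hh_def
    have hg₁diff : DifferentiableOn ℂ g₁ (ball (0:ℂ) r) := hgdiff.sub (differentiableOn_const _)
    have hhdiff : DifferentiableOn ℂ h (ball (0:ℂ) r) :=
      (hg₁diff.sub (differentiableOn_const _)).div (hg₁diff.add (differentiableOn_const _)) hden
    have hh0 : h 0 = 0 := by
      simp [hh_def, hg₁0]
    have hkey : ∀ w : ℂ, 0 < w.re → ‖w - (a:ℂ)‖ < ‖w + (a:ℂ)‖ := by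
      intro w hw
      rw [Complex.norm_def, Complex.norm_def]
      apply Real.sqrt_lt_sqrt (Complex.normSq_nonneg _)
      simp only [Complex.normSq_apply, Complex.sub_re, Complex.sub_im, Complex.add_re,
        Complex.add_im, Complex.ofReal_re, Complex.ofReal_im]
      nlinarith
    have habs : ∀ z ∈ ball (0:ℂ) r, ‖h z‖ < 1 := by
      intro z hz
      have hdpos : 0 < ‖g₁ z + (a:ℂ)‖ := norm_pos_iff.mpr (hden z hz)
      rw [hh_def]
      simp only [norm_div]
      rw [div_lt_one hdpos]
      exact hkey _ (hpos z hz)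
    have hmaps : MapsTo h (ball (0:ℂ) r) (ball (h 0) 1) := by
      intro z hz
      rw [hh0, mem_ball, dist_zero_right]
      exact habs z hz
    have hschwarz := Complex.dist_le_div_mul_dist_of_mapsTo_ball hhdiff (hmaps.mono_right ball_subset_closedBall) hz₀'
    rw [hh0, dist_zero_right, dist_zero_right] at hschwarz
    have hz₀ρ : ‖z₀‖ ≤ ρ := mem_closedBall_zero_iff.mp hz₀
    have ht : ‖h z₀‖ ≤ ρ / r := by
      calc ‖h z₀‖ ≤ 1 / r * ‖z₀‖ := hschwarz
        _ ≤ 1 / r * ρ := by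
            apply mul_le_mul_of_nonneg_left hz₀ρ (by positivity)
        _ = ρ / r := by ring
    set w : ℂ := g₁ z₀ with hw_def
    have heq : w - (a:ℂ) = h z₀ * (w + (a:ℂ)) := by
      rw [hh_def]
      field_simp [hden z₀ hz₀']
      rw [hw_def]
    have hub : ‖w‖ - a ≤ ρ / r * (‖w‖ + a) := by
      have h1' : ‖w‖ - a ≤ ‖w - (a:ℂ)‖ := by
        have := norm_sub_norm_le w ((a:ℂ))
        simpa [Complex.norm_real, abs_of_pos ha] using this
      have h2' : ‖w - (a:ℂ)‖ = ‖h z₀‖ * ‖w + (a:ℂ)‖ := by rw [heq, norm_mul]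
      have h3' : ‖w + (a:ℂ)‖ ≤ ‖w‖ + a := by
        have := norm_add_le w ((a:ℂ))
        simpa [Complex.norm_real, abs_of_pos ha] using this
      calc ‖w‖ - a ≤ ‖h z₀‖ * ‖w + (a:ℂ)‖ := by rw [← h2']; exact h1'
        _ ≤ ρ / r * (‖w‖ + a) := by
            apply mul_le_mul ht h3' (norm_nonneg _) (by positivity)
    have hwnorm : ‖w‖ ≤ a * ((r + ρ) / (r - ρ)) := by
      have hrρ : 0 < r - ρ := by linarith
      rw [mul_div_assoc', le_div_iff₀ hrρ]
      have hmul := mul_le_mul_of_nonneg_right hub hr.le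
      have hexp : (ρ / r * (‖w‖ + a)) * r = ρ * (‖w‖ + a) := by field_simp
      rw [hexp] at hmul
      nlinarith [norm_nonneg w]
    have hlog : Real.log ‖u z₀‖ ≤ a * ((r + ρ) / (r - ρ)) := by
      have := Complex.re_le_norm w
      have hrw : w.re = Real.log ‖u z₀‖ := by rw [hw_def, hg₁re, hre z₀ hz₀']
      linarith
    have hu0pos : 0 < ‖u 0‖ := by linarith [h1 0 h0mem]
    have huz₀pos : 0 < ‖u z₀‖ := by linarith [h1 z₀ hz₀']
    calc ‖u z₀‖ = Real.exp (Real.log ‖u z₀‖) := (Real.exp_log huz₀pos).symm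
      _ ≤ Real.exp (a * ((r + ρ) / (r - ρ))) := Real.exp_le_exp.mpr hlog
      _ = ‖u 0‖ ^ ((r + ρ) / (r - ρ)) := by
          rw [Real.rpow_def_of_pos hu0pos]

/-- Let `0 < ρ < r` with `(r+ρ)/(r-ρ) < 2` and `ε > 0`.  If `f`
is holomorphic on `U_r(0)` with `|f'| ≥ 1` and `f^# ≥ ε` there, then
`max_{|z| ≤ ρ} |f(z)| ≤ ((1/ε)·(1/ρ)^{(r+ρ)/(r-ρ)})^{1/(2-(r+ρ)/(r-ρ))}`. -/
theorem max_modulus_bound (ρ r ε : ℝ) (hρ : 0 < ρ) (hρr : ρ < r)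
    (hquot : (r + ρ) / (r - ρ) < 2) (hε : 0 < ε)
    (f : ℂ → ℂ) (hf : DifferentiableOn ℂ f (ball (0 : ℂ) r))
    (hf' : ∀ z ∈ ball (0 : ℂ) r, 1 ≤ ‖deriv f z‖)
    (hsph : ∀ z ∈ ball (0 : ℂ) r, ε ≤ sphDeriv f z) :
    ∀ z ∈ closedBall (0 : ℂ) ρ,
      ‖f z‖ ≤ ((1 / ε) * (1 / ρ) ^ ((r + ρ) / (r - ρ))) ^
        (1 / (2 - (r + ρ) / (r - ρ))) := by
  have hr : 0 < r := hρ.trans hρr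
  have hrρ : 0 < r - ρ := by linarith
  set α : ℝ := (r + ρ) / (r - ρ) with hα_def
  have hα0 : 0 < α := by positivity
  have hα2 : α < 2 := hquot
  have h2α : 0 < 2 - α := by linarith
  have h0mem : (0:ℂ) ∈ ball (0:ℂ) r := by simpa using hr
  have hsub : closedBall (0:ℂ) ρ ⊆ ball (0:ℂ) r := closedBall_subset_ball hρr
  have hcont : ContinuousOn f (closedBall (0:ℂ) ρ) := hf.continuousOn.mono hsub
  obtain ⟨z₀, hz₀mem, hz₀max⟩ :=
    (isCompact_closedBall (0:ℂ) ρ).exists_isMaxOn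
      ⟨0, mem_closedBall_self hρ.le⟩ hcont.norm
  set M : ℝ := ‖f z₀‖ with hM_def
  have hz₀' : z₀ ∈ ball (0:ℂ) r := hsub hz₀mem
  -- Cauchy estimate
  have hdc : DiffContOnCl ℂ f (ball (0:ℂ) ρ) :=
    ⟨hf.mono (ball_subset_ball hρr.le), hcont.mono closure_ball_subset_closedBall⟩
  have hC : ∀ z ∈ sphere (0:ℂ) ρ, ‖f z‖ ≤ M := fun z hz =>
    hz₀max (sphere_subset_closedBall hz)
  have hcauchy : ‖deriv f 0‖ ≤ M / ρ := Complex.norm_deriv_le_of_forall_mem_sphere_norm_le hρ hdc hC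
  -- basic facts about M
  have hd0 : 1 ≤ ‖deriv f 0‖ := hf' 0 h0mem
  have hMρ : ρ ≤ M := by
    have : 1 ≤ M / ρ := le_trans hd0 hcauchy
    rw [le_div_iff₀ hρ] at this
    linarith
  have hM0 : 0 < M := lt_of_lt_of_le hρ hMρ
  -- derivative of f is holomorphic
  have hdf : DifferentiableOn ℂ (deriv f) (ball (0:ℂ) r) :=
    (hf.analyticOnNhd isOpen_ball).deriv.differentiableOn
  have hharnack : ‖deriv f z₀‖ ≤ ‖deriv f 0‖ ^ α :=
    harnack_bound hρ hρr hdf hf' hz₀mem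
  -- spherical derivative bound at z₀
  have han : AnalyticAt ℂ f z₀ := hf.analyticAt (isOpen_ball.mem_nhds hz₀')
  have hsph₀ : ε ≤ ‖deriv f z₀‖ / (1 + M ^ 2) := by
    have := hsph z₀ hz₀'
    rwa [sphDeriv, if_pos han] at this
  have hchain : ε * (1 + M ^ 2) ≤ (M / ρ) ^ α := by
    have h1' : ε * (1 + M ^ 2) ≤ ‖deriv f z₀‖ := by
      rw [le_div_iff₀ (by positivity)] at hsph₀
      linarith
    have h2' : ‖deriv f 0‖ ^ α ≤ (M / ρ) ^ α :=
      Real.rpow_le_rpow (norm_nonneg _) hcauchy hα0.le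
    linarith
  -- algebraic finish
  set C : ℝ := (1 / ε) * (1 / ρ) ^ α with hC_def
  have hMsq : M ^ 2 ≤ C * M ^ α := by
    have hdiv : (M / ρ) ^ α = M ^ α * (1 / ρ) ^ α := by
      rw [div_eq_mul_inv, Real.mul_rpow hM0.le (by positivity), one_div]
    have h3' : ε * M ^ 2 ≤ (M / ρ) ^ α := by nlinarith [sq_nonneg M]
    rw [hdiv] at h3'
    rw [hC_def]
    calc M ^ 2 ≤ (M ^ α * (1 / ρ) ^ α) / ε := by
          rw [le_div_iff₀ hε]
          linarith [h3']
      _ = (1 / ε) * (1 / ρ) ^ α * M ^ α := by ring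
  have hkey : M ^ (2 - α) ≤ C := by
    rw [Real.rpow_sub hM0]
    rw [div_le_iff₀ (Real.rpow_pos_of_pos hM0 α)]
    have : M ^ (2:ℝ) = M ^ 2 := by
      rw [← Real.rpow_natCast M 2]; norm_num
    rw [this]
    linarith [hMsq]
  have hfinal : M ≤ C ^ (1 / (2 - α)) := by
    have h5' := Real.rpow_le_rpow (Real.rpow_nonneg hM0.le _) hkey (by positivity : (0:ℝ) ≤ 1 / (2 - α))
    rwa [← Real.rpow_mul hM0.le, mul_one_div, div_self (by linarith : 2 - α ≠ 0),
      Real.rpow_one] at h5'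
  intro z hz
  exact le_trans (hz₀max hz) hfinal
end
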